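/- arXiv:1309.5116 — 8 statements merged into one kernel-verified Lean document; each statement's English description precedes it below -/
import Mathlib

section
/- Fix an odd integer b ≥ 3 and an even integer n ≥ 2. For all integers i, j with -n/2 ≤ i, j ≤ n/2, the balanced carries transition probability satisfies K(i,j) = b^{-n} · Σ_{l=0}^{⌊ j + ((n+1)/b)·((b-1)/2) - i/b ⌋} (-1)^l · C(n+1, l) · C(n + jb + (n+1)(b-1)/2 - i - lb, n), where C(m, n) denotes the binomial coefficient, taken to be 0 whenever m < n. -/
/-- The number of `n`-tuples of balanced base-`b` digits `(X_1, …, X_n)`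
(integers with `|X_k| ≤ (b-1)/2`) such that
`j*b - (b-1)/2 ≤ i + X_1 + ⋯ + X_n ≤ j*b + (b-1)/2`. -/
noncomputable def balN (b : ℤ) (n : ℕ) (i j : ℤ) : ℕ :=
  (Finset.filter
    (fun X : Fin n → ℤ =>
      j * b - (b - 1) / 2 ≤ i + ∑ k, X k ∧ i + ∑ k, X k ≤ j * b + (b - 1) / 2)
    (Fintype.piFinset fun _ : Fin n => Finset.Icc (-((b - 1) / 2)) ((b - 1) / 2))).card

/-- The balanced carries transition probability `K(i,j) = b^{-n} N(i,j)`. -/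
noncomputable def balK (b : ℤ) (n : ℕ) (i j : ℤ) : ℚ := (balN b n i j : ℚ) / (b : ℚ) ^ n

/-- The binomial coefficient `C(m, k)` for integers `m, k`, with the convention that
`C(m, k) = 0` whenever `m < k` (in particular whenever `m` is negative) or `k < 0`. -/
def intChoose (m k : ℤ) : ℤ :=
  if 0 ≤ m ∧ 0 ≤ k then (m.toNat.choose k.toNat : ℤ) else 0


open Finset PowerSeries

lemma intChoose_eq_zero_of_lt {m k : ℤ} (h : m < k) : intChoose m k = 0 := by
  unfold intChoose
  split_ifs with h'
  · exact_mod_cast Nat.choose_eq_zero_of_lt (by omega)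
  · rfl

/-- auxiliary digit function -/
def gfun (m slack : ℤ) (n : ℕ) (X : Fin n → ℤ) : ℕ → ℕ :=
  fun k => if hk : k < n then (X ⟨k, hk⟩ + m).toNat else if k = n then slack.toNat else 0

lemma gfun_supp (m slack : ℤ) (n : ℕ) (X : Fin n → ℤ) (k : ℕ)
    (hk : gfun m slack n X k ≠ 0) : k ∈ Finset.range (n + 1) := by
  by_contra hkn
  simp only [Finset.mem_range, not_lt] at hkn
  unfold gfun at hk
  rw [dif_neg (by omega), if_neg (by omega)] at hk
  exact hk rfl

lemma gfun_sum (m slack : ℤ) (n : ℕ) (X : Fin n → ℤ) (hX : ∀ k, -m ≤ X k) (hs : 0 ≤ slack) :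
    ((∑ k ∈ Finset.range (n + 1), gfun m slack n X k : ℕ) : ℤ) =
      (∑ k, X k) + n * m + slack := by
  push_cast
  rw [Finset.sum_range_succ]
  have hlast : ((gfun m slack n X n : ℕ) : ℤ) = slack := by
    unfold gfun
    rw [dif_neg (lt_irrefl n), if_pos rfl, Int.toNat_of_nonneg hs]
  have hmain : ∑ k ∈ Finset.range n, ((gfun m slack n X k : ℕ) : ℤ) =
      (∑ k, X k) + n * m := by
    rw [Finset.sum_range fun k => ((gfun m slack n X k : ℕ) : ℤ)]
    have : ∀ k : Fin n, ((gfun m slack n X k.val : ℕ) : ℤ) = X k + m := by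
      intro k
      unfold gfun
      rw [dif_pos k.isLt, Int.toNat_of_nonneg (by have := hX k; simp only [Fin.eta]; omega)]
    calc ∑ k : Fin n, ((gfun m slack n X k.val : ℕ) : ℤ)
        = ∑ k : Fin n, (X k + m) := Finset.sum_congr rfl fun k _ => this k
      _ = (∑ k, X k) + n * m := by
          rw [Finset.sum_add_distrib, Finset.sum_const, Finset.card_univ, Fintype.card_fin,
            nsmul_eq_mul]
  rw [hmain, hlast]

lemma balN_eq_card (b : ℤ) (hodd : Odd b) (hb : 3 ≤ b) (n : ℕ) (i j : ℤ)
    (hT : 0 ≤ j * b + (n + 1) * ((b - 1) / 2) - i) :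
    balN b n i j =
      (Finset.filter (fun l : ℕ →₀ ℕ => ∀ k ∈ Finset.range (n + 1), l k < b.toNat)
        (Finset.finsuppAntidiag (Finset.range (n + 1))
          (j * b + (n + 1) * ((b - 1) / 2) - i).toNat)).card := by
  obtain ⟨c, hc⟩ := hodd
  set m : ℤ := (b - 1) / 2 with hm
  have hmc : b = 2 * m + 1 := by omega
  have hbt : (b.toNat : ℤ) = b := Int.toNat_of_nonneg (by omega)
  set T : ℤ := j * b + (n + 1) * m - i with hTdef
  have hTcast : ((T.toNat : ℤ)) = T := Int.toNat_of_nonneg hT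
  unfold balN
  refine Finset.card_bij'
    (fun X hX => Finsupp.onFinset (Finset.range (n + 1))
      (gfun m (j * b + m - i - ∑ k, X k) n X)
      (gfun_supp m (j * b + m - i - ∑ k, X k) n X))
    (fun l hl => fun k : Fin n => (l k : ℤ) - m) ?_ ?_ ?_ ?_
  · -- forward
    intro X hX
    simp only [Finset.mem_filter, Fintype.mem_piFinset, Finset.mem_Icc] at hX
    obtain ⟨hXmem, hlo, hhi⟩ := hX
    have hXlo : ∀ k, -m ≤ X k := fun k => (hXmem k).1
    have hs0 : 0 ≤ j * b + m - i - ∑ k, X k := by omega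
    have hsum := gfun_sum m (j * b + m - i - ∑ k, X k) n X hXlo hs0
    rw [Finset.mem_filter]
    refine ⟨Finset.mem_finsuppAntidiag.2 ⟨?_, Finsupp.support_onFinset_subset⟩, ?_⟩
    · apply Int.natCast_inj.mp
      rw [hTcast]
      simp only [Finsupp.coe_onFinset]
      rw [hsum]
      push_cast
      ring
    · intro k hk
      simp only [Finsupp.onFinset_apply]
      unfold gfun
      by_cases hkn : k < n
      · rw [dif_pos hkn]
        have := hXmem ⟨k, hkn⟩
        omega
      · rw [dif_neg hkn]
        by_cases hke : k = n
        · rw [if_pos hke]; omega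
        · rw [if_neg hke]; omega
  · -- backward
    intro l hl
    beta_reduce
    simp only [Finset.mem_filter, Finset.mem_finsuppAntidiag] at hl
    obtain ⟨⟨hsum, hsupp⟩, hbd⟩ := hl
    have hsumZ : ∑ k ∈ Finset.range (n + 1), (l k : ℤ) = T := by
      rw [← hTcast, ← hsum]
      push_cast
      rfl
    have hlast : (l n : ℤ) < b := by
      have := hbd n (Finset.mem_range.2 (Nat.lt_succ_self n))
      omega
    have hbdZ : ∀ k : Fin n, (l k.val : ℤ) < b := by
      intro k
      have := hbd k.val (Finset.mem_range.2 (Nat.lt_succ_of_lt k.isLt))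
      omega
    have hsplit : ∑ k ∈ Finset.range n, (l k : ℤ) = T - l n := by
      rw [← hsumZ, Finset.sum_range_succ]; ring
    have hfs : ∑ k : Fin n, ((l k.val : ℤ) - m) = T - l n - n * m := by
      rw [Finset.sum_sub_distrib, Finset.sum_const, Finset.card_univ, Fintype.card_fin,
        nsmul_eq_mul, ← hsplit, Fin.sum_univ_eq_sum_range (fun k => (l k : ℤ)) n]
    have hexp : ((n : ℤ) + 1) * m = (n : ℤ) * m + m := by ring
    simp only [Finset.mem_filter, Fintype.mem_piFinset, Finset.mem_Icc]
    refine ⟨fun k => ?_, ?_, ?_⟩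
    · have := hbdZ k
      constructor <;> omega
    · rw [hfs]; omega
    · rw [hfs]; omega
  · -- left inverse
    intro X hX
    simp only [Finset.mem_filter, Fintype.mem_piFinset, Finset.mem_Icc] at hX
    funext k
    simp only [Finsupp.onFinset_apply]
    unfold gfun
    rw [dif_pos k.isLt]
    have := hX.1 k
    simp only [Fin.eta]
    omega
  · -- right inverse
    intro l hl
    beta_reduce
    simp only [Finset.mem_filter, Finset.mem_finsuppAntidiag] at hl
    obtain ⟨⟨hsum, hsupp⟩, hbd⟩ := hl
    have hsumZ : ∑ k ∈ Finset.range (n + 1), (l k : ℤ) = T := by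
      rw [← hTcast, ← hsum]
      push_cast
      rfl
    have hsplit : ∑ k ∈ Finset.range n, (l k : ℤ) = T - l n := by
      rw [← hsumZ, Finset.sum_range_succ]; ring
    have hfs : ∑ k : Fin n, ((l k.val : ℤ) - m) = T - l n - n * m := by
      rw [Finset.sum_sub_distrib, Finset.sum_const, Finset.card_univ, Fintype.card_fin,
        nsmul_eq_mul, ← hsplit, Fin.sum_univ_eq_sum_range (fun k => (l k : ℤ)) n]
    have hexp : ((n : ℤ) + 1) * m = (n : ℤ) * m + m := by ring
    ext k
    simp only [Finsupp.onFinset_apply]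
    unfold gfun
    by_cases hkn : k < n
    · rw [dif_pos hkn]
      beta_reduce
      simp only [Fin.val_mk]
      omega
    · rw [dif_neg hkn]
      by_cases hke : k = n
      · subst hke
        rw [if_pos rfl, hfs]
        omega
      · rw [if_neg hke]
        have : l k = 0 := Finsupp.notMem_support_iff.1 fun hc' => by
          have := hsupp hc'
          simp only [Finset.mem_range] at this
          omega
        omega





lemma coeff_geom (β : ℕ) (t : ℕ) :
    coeff t (∑ d ∈ range β, (X : ℤ⟦X⟧) ^ d) = if t < β then 1 else 0 := by
  rw [map_sum]
  simp [PowerSeries.coeff_X_pow, Finset.sum_ite_eq, Finset.mem_range]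

lemma coeff_count (β M T : ℕ) :
    coeff T ((∑ d ∈ range β, (X : ℤ⟦X⟧) ^ d) ^ M) =
      ((Finset.filter (fun l => ∀ k ∈ Finset.range M, l k < β)
        (Finset.finsuppAntidiag (Finset.range M) T)).card : ℤ) := by
  rw [PowerSeries.coeff_pow]
  rw [← Finset.sum_boole]
  refine Finset.sum_congr rfl fun l _ => ?_
  rw [← Finset.prod_boole]
  exact Finset.prod_congr rfl fun k _ => coeff_geom β (l k)

lemma coeff_formula (β M T : ℕ) (hM : 0 < M) :
    coeff T ((∑ d ∈ range β, (X : ℤ⟦X⟧) ^ d) ^ M) =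
      ∑ l ∈ range (M + 1), (-1 : ℤ) ^ l * (M.choose l) *
        (if l * β ≤ T then (((M - 1) + (T - l * β)).choose (M - 1) : ℤ) else 0) := by
  set S : ℤ⟦X⟧ := ∑ d ∈ range β, (X : ℤ⟦X⟧) ^ d with hS
  have h1 : S * ((X : ℤ⟦X⟧) - 1) = X ^ β - 1 := geom_sum_mul _ _
  have h2 : S ^ M * (1 - (X : ℤ⟦X⟧)) ^ M = (1 - (X : ℤ⟦X⟧) ^ β) ^ M := by
    have h := congrArg (· ^ M) h1
    simp only [mul_pow] at h
    have hx : ((X : ℤ⟦X⟧) - 1) ^ M = (-1) ^ M * (1 - (X : ℤ⟦X⟧)) ^ M := by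
      rw [← neg_sub, neg_pow]
    have hy : ((X : ℤ⟦X⟧) ^ β - 1) ^ M = (-1) ^ M * (1 - (X : ℤ⟦X⟧) ^ β) ^ M := by
      rw [← neg_sub, neg_pow]
    rw [hx, hy] at h
    have hne : ((-1 : ℤ⟦X⟧)) ^ M ≠ 0 := pow_ne_zero _ (by
      intro hc
      have := congrArg (coeff 0) hc
      simp at this)
    apply mul_left_cancel₀ hne
    rw [← h]; ring
  set u := invOneSubPow ℤ M with hu
  have h3 : S ^ M = (1 - (X : ℤ⟦X⟧) ^ β) ^ M * u.val := by
    have hinv : u.inv = (1 - (X : ℤ⟦X⟧)) ^ M := invOneSubPow_inv_eq_one_sub_pow ℤ M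
    calc S ^ M = S ^ M * (u.inv * u.val) := by rw [u.inv_val, mul_one]
    _ = (S ^ M * (1 - (X : ℤ⟦X⟧)) ^ M) * u.val := by rw [hinv]; ring
    _ = (1 - (X : ℤ⟦X⟧) ^ β) ^ M * u.val := by rw [h2]
  have h4 : (1 - (X : ℤ⟦X⟧) ^ β) ^ M =
      ∑ l ∈ range (M + 1), ((-1 : ℤ⟦X⟧) ^ l * (M.choose l : ℤ⟦X⟧)) * X ^ (l * β) := by
    have := add_pow (-(X : ℤ⟦X⟧) ^ β) 1 M
    rw [neg_add_eq_sub] at this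
    rw [this]
    refine Finset.sum_congr rfl fun l _ => ?_
    rw [neg_pow, ← pow_mul, one_pow]
    ring
  rw [h3, h4, Finset.sum_mul, map_sum]
  refine Finset.sum_congr rfl fun l _ => ?_
  have : (-1 : ℤ⟦X⟧) ^ l * (M.choose l : ℤ⟦X⟧) * X ^ (l * β) * u.val
      = ((-1 : ℤ) ^ l * (M.choose l)) • (u.val * X ^ (l * β)) := by
    rw [zsmul_eq_mul]
    push_cast
    ring
  rw [this, map_smul, smul_eq_mul]
  congr 1
  rw [PowerSeries.coeff_mul_X_pow']
  have hcu : ∀ r : ℕ, coeff r u.val = (((M - 1) + r).choose (M - 1) : ℤ) := by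
    intro r
    rw [hu, invOneSubPow_val_eq_mk_sub_one_add_choose_of_pos ℤ M hM, PowerSeries.coeff_mk]
  split_ifs with h
  · rw [hcu]
  · rfl

theorem stmt1 (b : ℤ) (hodd : Odd b) (hb : 3 ≤ b) (n : ℕ) (hneven : Even n) (hn : 2 ≤ n)
    (i j : ℤ) (hi1 : -(n : ℤ) / 2 ≤ i) (hi2 : i ≤ (n : ℤ) / 2)
    (hj1 : -(n : ℤ) / 2 ≤ j) (hj2 : j ≤ (n : ℤ) / 2) :
    balK b n i j =
      (1 / (b : ℚ) ^ n) *
        ∑ l ∈ Finset.Icc (0 : ℤ)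
            ⌊(j : ℚ) + (((n : ℚ) + 1) / (b : ℚ)) * (((b : ℚ) - 1) / 2) - (i : ℚ) / (b : ℚ)⌋,
          ((-1 : ℚ) ^ l) * (intChoose ((n : ℤ) + 1) l : ℚ) *
            (intChoose ((n : ℤ) + j * b + (n + 1) * ((b - 1) / 2) - i - l * b) (n : ℤ) : ℚ) := by
  obtain ⟨c, hc⟩ := hodd
  set m : ℤ := (b - 1) / 2 with hm
  have hmc : b = 2 * m + 1 := by omega
  have hb0 : (0 : ℤ) < b := by omega
  have hbt : (b.toNat : ℤ) = b := Int.toNat_of_nonneg (by omega)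
  set T : ℤ := j * b + (n + 1) * m - i with hTdef
  have hexp : ((n : ℤ) + 1) * m = (n : ℤ) * m + m := by ring
  have hfloor : ⌊(j : ℚ) + (((n : ℚ) + 1) / (b : ℚ)) * (((b : ℚ) - 1) / 2) - (i : ℚ) / (b : ℚ)⌋
      = T / b := by
    have hbq : (b : ℚ) ≠ 0 := by exact_mod_cast hb0.ne'
    have hmq : ((b : ℚ) - 1) / 2 = (m : ℚ) := by
      have : (b : ℚ) = 2 * (m : ℚ) + 1 := by exact_mod_cast hmc
      rw [this]; ring
    have heq : (j : ℚ) + (((n : ℚ) + 1) / (b : ℚ)) * (((b : ℚ) - 1) / 2) - (i : ℚ) / (b : ℚ)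
        = (T : ℚ) / (b : ℚ) := by
      rw [hmq, hTdef]
      push_cast
      field_simp
    rw [heq, show ((b : ℚ)) = ((b.toNat : ℕ) : ℚ) by exact_mod_cast hbt.symm,
      Rat.floor_intCast_div_natCast, hbt]
  rw [hfloor]
  have harg : ∀ l : ℤ, (n : ℤ) + j * b + ((n : ℤ) + 1) * m - i - l * b = (n : ℤ) + T - l * b :=
    fun l => by rw [hTdef]; ring
  simp only [harg]
  by_cases hT : 0 ≤ T
  · have hTcast : (T.toNat : ℤ) = T := Int.toNat_of_nonneg hT
    have hcard : balN b n i j =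
        (Finset.filter (fun l : ℕ →₀ ℕ => ∀ k ∈ Finset.range (n + 1), l k < b.toNat)
          (Finset.finsuppAntidiag (Finset.range (n + 1)) T.toNat)).card := by
      have h := balN_eq_card b ⟨c, hc⟩ hb n i j (by rw [← hm]; omega)
      rw [← hm] at h
      rw [h]
    have hcount : (balN b n i j : ℤ) = ∑ l ∈ Finset.range (n + 1 + 1),
        (-1 : ℤ) ^ l * ((n + 1).choose l) *
          (if l * b.toNat ≤ T.toNat
            then ((n + (T.toNat - l * b.toNat)).choose n : ℤ) else 0) := by
      rw [hcard, ← coeff_count b.toNat (n + 1) T.toNat,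
        coeff_formula b.toNat (n + 1) T.toNat (Nat.succ_pos n)]
      simp only [Nat.add_sub_cancel]
    have hcountQ : (balN b n i j : ℚ) = ∑ l ∈ Finset.range (n + 1 + 1),
        (-1 : ℚ) ^ l * ((n + 1).choose l : ℚ) *
          (if l * b.toNat ≤ T.toNat
            then ((n + (T.toNat - l * b.toNat)).choose n : ℚ) else 0) := by
      have h := congrArg (fun z : ℤ => (z : ℚ)) hcount
      push_cast [apply_ite (fun z : ℤ => (z : ℚ))] at h
      exact h
    have hvan1 : ∀ l ∈ Finset.Icc (0 : ℤ) (max (T / b) ((n : ℤ) + 1)),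
        l ∉ Finset.Icc (0 : ℤ) (T / b) →
        ((-1 : ℚ) ^ l) * (intChoose ((n : ℤ) + 1) l : ℚ) *
          (intChoose ((n : ℤ) + T - l * b) (n : ℤ) : ℚ) = 0 := by
      intro l hl hnl
      rw [Finset.mem_Icc] at hl
      rw [Finset.mem_Icc] at hnl
      have hFl : T / b < l := by omega
      have hlb : T < l * b := by
        have h1 := Int.mul_ediv_add_emod T b
        have h2 := Int.emod_lt_of_pos T hb0
        have h3 : (T / b + 1) * b ≤ l * b :=
          mul_le_mul_of_nonneg_right (by omega) (le_of_lt hb0)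
        have h4 : (T / b + 1) * b = b * (T / b) + b := by ring
        omega
      rw [intChoose_eq_zero_of_lt (show (n : ℤ) + T - l * b < (n : ℤ) by omega)]
      simp
    have hvan2 : ∀ l ∈ Finset.Icc (0 : ℤ) (max (T / b) ((n : ℤ) + 1)),
        l ∉ Finset.Icc (0 : ℤ) ((n : ℤ) + 1) →
        ((-1 : ℚ) ^ l) * (intChoose ((n : ℤ) + 1) l : ℚ) *
          (intChoose ((n : ℤ) + T - l * b) (n : ℤ) : ℚ) = 0 := by
      intro l hl hnl
      rw [Finset.mem_Icc] at hl
      rw [Finset.mem_Icc] at hnl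
      rw [intChoose_eq_zero_of_lt (show (n : ℤ) + 1 < l by omega)]
      simp
    have hsum1 : ∑ l ∈ Finset.Icc (0 : ℤ) (T / b),
        ((-1 : ℚ) ^ l) * (intChoose ((n : ℤ) + 1) l : ℚ) *
          (intChoose ((n : ℤ) + T - l * b) (n : ℤ) : ℚ)
        = ∑ l ∈ Finset.Icc (0 : ℤ) (max (T / b) ((n : ℤ) + 1)),
        ((-1 : ℚ) ^ l) * (intChoose ((n : ℤ) + 1) l : ℚ) *
          (intChoose ((n : ℤ) + T - l * b) (n : ℤ) : ℚ) :=
      Finset.sum_subset (Finset.Icc_subset_Icc_right (le_max_left _ _)) hvan1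
    have hsum2 : ∑ l ∈ Finset.Icc (0 : ℤ) ((n : ℤ) + 1),
        ((-1 : ℚ) ^ l) * (intChoose ((n : ℤ) + 1) l : ℚ) *
          (intChoose ((n : ℤ) + T - l * b) (n : ℤ) : ℚ)
        = ∑ l ∈ Finset.Icc (0 : ℤ) (max (T / b) ((n : ℤ) + 1)),
        ((-1 : ℚ) ^ l) * (intChoose ((n : ℤ) + 1) l : ℚ) *
          (intChoose ((n : ℤ) + T - l * b) (n : ℤ) : ℚ) :=
      Finset.sum_subset (Finset.Icc_subset_Icc_right (le_max_right _ _)) hvan2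
    have hsum3 : ∑ l ∈ Finset.Icc (0 : ℤ) ((n : ℤ) + 1),
        ((-1 : ℚ) ^ l) * (intChoose ((n : ℤ) + 1) l : ℚ) *
          (intChoose ((n : ℤ) + T - l * b) (n : ℤ) : ℚ)
        = ∑ l ∈ Finset.range (n + 1 + 1),
        (-1 : ℚ) ^ l * ((n + 1).choose l : ℚ) *
          (if l * b.toNat ≤ T.toNat
            then ((n + (T.toNat - l * b.toNat)).choose n : ℚ) else 0) := by
      refine Finset.sum_nbij' (fun a => a.toNat) (fun a => (a : ℤ)) ?_ ?_ ?_ ?_ ?_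
      · intro a ha
        rw [Finset.mem_Icc] at ha
        rw [Finset.mem_range]
        beta_reduce
        omega
      · intro a ha
        rw [Finset.mem_range] at ha
        rw [Finset.mem_Icc]
        beta_reduce
        omega
      · intro a ha
        rw [Finset.mem_Icc] at ha
        beta_reduce
        omega
      · intro a _
        beta_reduce
        exact Int.toNat_natCast a
      · intro a ha
        rw [Finset.mem_Icc] at ha
        obtain ⟨a', rfl⟩ : ∃ a' : ℕ, a = (a' : ℤ) := ⟨a.toNat, (Int.toNat_of_nonneg ha.1).symm⟩
        beta_reduce
        rw [Int.toNat_natCast]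
        have e1 : ((-1 : ℚ) ^ (a' : ℤ)) = (-1 : ℚ) ^ a' := zpow_natCast _ _
        have e2 : intChoose ((n : ℤ) + 1) (a' : ℤ) = ((n + 1).choose a' : ℤ) := by
          unfold intChoose
          rw [if_pos ⟨by omega, by omega⟩]
          have h1 : ((n : ℤ) + 1).toNat = n + 1 := by omega
          rw [h1, Int.toNat_natCast]
        have hab : ((a' * b.toNat : ℕ) : ℤ) = (a' : ℤ) * b := by push_cast; rw [hbt]
        by_cases hle : a' * b.toNat ≤ T.toNat
        · have e3 : intChoose ((n : ℤ) + T - (a' : ℤ) * b) (n : ℤ)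
              = ((n + (T.toNat - a' * b.toNat)).choose n : ℤ) := by
            unfold intChoose
            rw [if_pos ⟨by omega, by omega⟩]
            have h1 : ((n : ℤ) + T - (a' : ℤ) * b).toNat = n + (T.toNat - a' * b.toNat) := by
              omega
            have h2 : ((n : ℤ)).toNat = n := by omega
            rw [h1, h2]
          rw [e1, e2, e3, if_pos hle]
          push_cast
          ring
        · have e3 : intChoose ((n : ℤ) + T - (a' : ℤ) * b) (n : ℤ) = 0 :=
            intChoose_eq_zero_of_lt (by omega)
          rw [e1, e2, e3, if_neg hle]
          push_cast
          ring
    rw [balK, hcountQ, ← hsum3, hsum2, ← hsum1]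
    ring
  · -- degenerate case: empty interval and empty count
    push_neg at hT
    have hF : T / b < 0 := Int.ediv_neg_of_neg_of_pos hT hb0
    rw [Finset.Icc_eq_empty (by omega), Finset.sum_empty, mul_zero]
    have hbal0 : balN b n i j = 0 := by
      rw [balN, Finset.card_eq_zero, Finset.filter_eq_empty_iff]
      intro X hX
      rw [Fintype.mem_piFinset] at hX
      rintro ⟨h1, h2⟩
      have hsumlb : (Finset.univ : Finset (Fin n)).card • (-m) ≤ ∑ k, X k :=
        Finset.card_nsmul_le_sum _ _ _ fun k _ => (Finset.mem_Icc.1 (hX k)).1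
      rw [Finset.card_univ, Fintype.card_fin, nsmul_eq_mul] at hsumlb
      push_cast at hsumlb
      rw [mul_neg] at hsumlb
      linarith [hexp]
    rw [balK, hbal0]
    simp
end

section
/- Fix an odd integer b ≥ 3 and an even integer n ≥ 2. For every integer j with 0 ≤ j ≤ n, the vector v_j, defined at each state i with -n/2 ≤ i ≤ n/2 by v_j[i] = Σ_{r=0}^{i+n/2} (-1)^r · C(n+1, r) · (n+2i-2r+1)^{n-j}, is a left eigenvector of the balanced carries transition matrix K with eigenvalue b^{-j}; that is, for every integer k with -n/2 ≤ k ≤ n/2, Σ_{i=-n/2}^{n/2} v_j[i] · K(i,k) = b^{-j} · v_j[k]. -/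
/-- The left eigenvector `v_j` of the balanced carries chain, evaluated at state `i`:
`v_j[i] = Σ_{r=0}^{i+n/2} (-1)^r C(n+1,r) (n+2i-2r+1)^{n-j}`. -/
def leftEig (n : ℕ) (j : ℕ) (i : ℤ) : ℤ :=
  ∑ r ∈ Finset.range ((i + (n : ℤ) / 2).toNat + 1),
    (-1 : ℤ) ^ r * (Nat.choose (n + 1) r : ℤ) * ((n : ℤ) + 2 * i - 2 * r + 1) ^ (n - j)

open Finset

/-- Pascal step: (N+1)-st alternating binomial sum as N-th of differences. -/
lemma pascalStep (N : ℕ) (φ : ℕ → ℤ) :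
    ∑ r ∈ range (N + 2), (-1 : ℤ) ^ r * ((N + 1).choose r : ℤ) * φ r
      = ∑ r ∈ range (N + 1), (-1 : ℤ) ^ r * (N.choose r : ℤ) * (φ r - φ (r + 1)) := by
  have h1 : ∑ r ∈ range (N + 2), (-1 : ℤ) ^ r * ((N + 1).choose r : ℤ) * φ r
      = φ 0 + ∑ r ∈ range (N + 1), (-1 : ℤ) ^ (r+1) * ((N + 1).choose (r+1) : ℤ) * φ (r+1) := by
    rw [Finset.sum_range_succ' (fun r => (-1 : ℤ) ^ r * ((N + 1).choose r : ℤ) * φ r) (N+1)]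
    simp [add_comm]
  have h2 : ∀ r, ((N + 1).choose (r+1) : ℤ) = (N.choose r : ℤ) + (N.choose (r+1) : ℤ) := by
    intro r; exact_mod_cast congrArg (Nat.cast : ℕ → ℤ) (Nat.choose_succ_succ N r)
  have h3 : ∑ r ∈ range (N + 1), (-1:ℤ)^(r+1) * ((N + 1).choose (r+1) : ℤ) * φ (r+1)
      = (∑ r ∈ range (N + 1), (-1:ℤ)^(r+1) * (N.choose r : ℤ) * φ (r+1))
        + ∑ r ∈ range (N + 1), (-1:ℤ)^(r+1) * (N.choose (r+1) : ℤ) * φ (r+1) := by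
    rw [← Finset.sum_add_distrib]; apply sum_congr rfl; intro r _; rw [h2]; ring
  have h4 : ∑ r ∈ range (N + 1), (-1:ℤ)^(r+1) * (N.choose (r+1) : ℤ) * φ (r+1)
      = (∑ r ∈ range (N + 1), (-1:ℤ)^r * (N.choose r : ℤ) * φ r) - φ 0 := by
    rw [Finset.sum_range_succ (fun r => (-1 : ℤ) ^ (r+1) * (N.choose (r+1) : ℤ) * φ (r+1)) N]
    rw [Finset.sum_range_succ' (fun r => (-1 : ℤ) ^ r * (N.choose r : ℤ) * φ r) N]
    simp [Nat.choose_succ_self]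
  have h6 : ∑ r ∈ range (N + 1), (-1:ℤ)^r * (N.choose r : ℤ) * (φ r - φ (r + 1))
      = (∑ r ∈ range (N + 1), (-1:ℤ)^r * (N.choose r : ℤ) * φ r)
        - ∑ r ∈ range (N + 1), (-1:ℤ)^r * (N.choose r : ℤ) * φ (r+1) := by
    rw [← Finset.sum_sub_distrib]; apply sum_congr rfl; intro r _; ring
  have h5 : ∑ r ∈ range (N + 1), (-1:ℤ)^(r+1) * (N.choose r : ℤ) * φ (r+1)
      = - ∑ r ∈ range (N + 1), (-1:ℤ)^r * (N.choose r : ℤ) * φ (r+1) := by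
    rw [← Finset.sum_neg_distrib]; apply sum_congr rfl; intro r _; ring
  rw [h1, h3, h4, h6, h5]; ring

/-- swap helper -/
lemma sum_mul_sum_swap (s t : Finset ℕ) (A B : ℕ → ℤ) (P : ℕ → ℕ → ℤ) :
    ∑ r ∈ s, A r * ∑ l ∈ t, B l * P r l = ∑ l ∈ t, B l * ∑ r ∈ s, A r * P r l := by
  simp_rw [Finset.mul_sum]
  rw [Finset.sum_comm]
  exact sum_congr rfl fun l _ => sum_congr rfl fun r _ => by ring

/-- Alternating binomial sums kill polynomials of low degree. -/
lemma altVanish : ∀ e N, e < N → ∀ c₁ c₂ : ℤ,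
    ∑ r ∈ range (N + 1), (-1 : ℤ) ^ r * (N.choose r : ℤ) * (c₁ + c₂ * r) ^ e = 0 := by
  intro e
  induction e using Nat.strong_induction_on with
  | _ e IH =>
    intro N heN c₁ c₂
    obtain ⟨N', rfl⟩ : ∃ N', N = N' + 1 := ⟨N - 1, by omega⟩
    rw [show N' + 1 + 1 = N' + 2 from rfl,
      pascalStep N' (fun r => (c₁ + c₂ * r) ^ e)]
    rcases Nat.eq_zero_or_pos e with he | he
    · subst he; simp
    · have key : ∀ r : ℕ, (c₁ + c₂ * (r:ℤ)) ^ e - (c₁ + c₂ * ((r+1:ℕ)):ℤ) ^ e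
          = ∑ l ∈ range e, (-(e.choose l : ℤ) * c₂ ^ (e - l)) * (c₁ + c₂ * r) ^ l := by
        intro r
        have expand : (c₁ + c₂ * ((r+1:ℕ)) : ℤ) ^ e
            = ∑ l ∈ range (e+1), (c₁ + c₂ * r) ^ l * c₂ ^ (e - l) * (e.choose l : ℤ) := by
          have h : (c₁ + c₂ * ((r+1:ℕ)) : ℤ) = (c₁ + c₂ * r) + c₂ := by push_cast; ring
          rw [h, add_pow]
        rw [expand, Finset.sum_range_succ]
        simp only [Nat.choose_self, Nat.cast_one, Nat.sub_self, pow_zero, mul_one]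
        have h2 : ∀ l ∈ range e, (-(e.choose l : ℤ) * c₂ ^ (e - l)) * (c₁ + c₂ * r) ^ l
            = -((c₁ + c₂ * r) ^ l * c₂ ^ (e - l) * (e.choose l : ℤ)) := fun l _ => by ring
        rw [Finset.sum_congr rfl h2, Finset.sum_neg_distrib]
        ring
      have step1 : ∑ r ∈ range (N' + 1), (-1:ℤ) ^ r * (N'.choose r : ℤ) *
            ((c₁ + c₂ * (r:ℤ)) ^ e - (c₁ + c₂ * ((r+1:ℕ)):ℤ) ^ e)
          = ∑ r ∈ range (N' + 1), ((-1:ℤ) ^ r * (N'.choose r : ℤ)) *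
              ∑ l ∈ range e, (-(e.choose l : ℤ) * c₂ ^ (e - l)) * (c₁ + c₂ * r) ^ l := by
        exact sum_congr rfl fun r _ => by rw [key r]
      rw [step1, sum_mul_sum_swap]
      apply Finset.sum_eq_zero
      intro l hl
      have hle : l < e := mem_range.mp hl
      have inner : ∑ r ∈ range (N' + 1), ((-1:ℤ) ^ r * (N'.choose r : ℤ)) * (c₁ + c₂ * r) ^ l
          = 0 := by
        rw [← IH l hle N' (by omega) c₁ c₂]
      rw [inner, mul_zero]

/-- truncated power function -/
def sig (d : ℕ) (t : ℤ) : ℤ := if 0 ≤ t then (2 * t + 1) ^ d else 0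

/-- its difference -/
def gg (d : ℕ) (t : ℤ) : ℤ := sig d t - sig d (t - 1)

lemma gg_neg (d : ℕ) (t : ℤ) (h : t < 0) : gg d t = 0 := by
  unfold gg sig
  rw [if_neg (by omega), if_neg (by omega), sub_zero]

lemma int_Icc_succ_right (l r : ℤ) (h : l ≤ r + 1) :
    Finset.Icc l (r + 1) = insert (r + 1) (Finset.Icc l r) := by
  ext x
  simp only [Finset.mem_Icc, Finset.mem_insert]
  omega

/-- telescoping over an integer interval -/
lemma telescope (F : ℤ → ℤ) (l : ℤ) : ∀ r : ℤ, l - 1 ≤ r →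
    ∑ s ∈ Finset.Icc l r, (F s - F (s - 1)) = F r - F (l - 1) := by
  refine Int.le_induction ?_ ?_
  · rw [Finset.Icc_eq_empty (by omega)]
    simp
  · intro r hr IH
    rw [int_Icc_succ_right l r (by omega), Finset.sum_insert (by simp), IH]
    ring_nf

/-- Window sum of `gg` at block `u` (Lemma A). -/
lemma windowSum (c : ℤ) (hc : 1 ≤ c) (d : ℕ) (u : ℤ) :
    ∑ s ∈ Finset.Icc (u * (2*c+1) - c) (u * (2*c+1) + c), gg d s
      = (2*c+1) ^ d * gg d u := by
  set b : ℤ := 2*c+1 with hbdef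
  have hsum : ∑ s ∈ Finset.Icc (u*b - c) (u*b + c), gg d s
      = sig d (u*b + c) - sig d (u*b - c - 1) := by
    have := telescope (sig d) (u*b - c) (u*b + c) (by omega)
    simpa [gg] using this
  rw [hsum]
  rcases lt_trichotomy u 0 with hu | hu | hu
  · -- u ≤ -1 : everything vanishes
    have h1 : u*b + c < 0 := by nlinarith
    have h2 : u*b - c - 1 < 0 := by nlinarith
    rw [gg_neg d u hu]
    unfold sig
    rw [if_neg (by omega), if_neg (by omega)]
    ring
  · subst hu
    simp only [zero_mul, zero_add, zero_sub]
    unfold gg sig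
    rw [if_pos (by omega), if_neg (by omega), if_pos le_rfl, if_neg (by omega)]
    ring
  · -- u ≥ 1
    have h1 : 0 ≤ u*b + c := by nlinarith
    have h2 : 0 ≤ u*b - c - 1 := by nlinarith
    unfold gg sig
    rw [if_pos h1, if_pos h2, if_pos (by omega), if_pos (by omega)]
    have e1 : 2 * (u*b + c) + 1 = b * (2*u + 1) := by rw [hbdef]; ring
    have e2 : 2 * (u*b - c - 1) + 1 = b * (2*u - 1) := by rw [hbdef]; ring
    rw [e1, e2, mul_pow, mul_pow]
    have e3 : (2 * (u - 1) + 1) = 2*u - 1 := by ring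
    rw [e3]
    ring

/-- number of `N`-tuples of balanced digits summing to `t` -/
noncomputable def ff (c : ℤ) (N : ℕ) (t : ℤ) : ℕ :=
  (Finset.filter (fun X : Fin N → ℤ => ∑ k, X k = t)
    (Fintype.piFinset fun _ : Fin N => Finset.Icc (-c) c)).card

lemma ff_zero (c : ℤ) (t : ℤ) : ff c 0 t = if t = 0 then 1 else 0 := by
  unfold ff
  rcases eq_or_ne t 0 with h | h
  · subst h
    rw [if_pos rfl]
    rw [Finset.filter_true_of_mem (fun X _ => by simp)]
    simp
  · rw [if_neg h]
    rw [Finset.filter_false_of_mem (fun X _ => by simp [Ne.symm h]), Finset.card_empty]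

lemma ff_succ (c : ℤ) (N : ℕ) (t : ℤ) :
    ff c (N+1) t = ∑ e ∈ Finset.Icc (-c) c, ff c N (t - e) := by
  unfold ff
  rw [Finset.card_eq_sum_card_fiberwise
    (f := fun X : Fin (N+1) → ℤ => X 0) (t := Finset.Icc (-c) c)
    (fun X hX => by
      have := Finset.mem_filter.mp hX
      exact (Fintype.mem_piFinset.mp this.1) 0)]
  apply Finset.sum_congr rfl
  intro e he
  apply Finset.card_nbij' (fun X => Fin.tail X) (fun Y => Fin.cons e Y)
  · intro X hX
    simp only [Finset.mem_coe, Finset.mem_filter, Fintype.mem_piFinset] at hX ⊢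
    obtain ⟨⟨hmem, hsum⟩, h0⟩ := hX
    constructor
    · intro i; exact hmem i.succ
    · rw [← hsum, ← h0, Fin.sum_univ_succ]
      simp [Fin.tail]
  · intro Y hY
    simp only [Finset.mem_coe, Finset.mem_filter, Fintype.mem_piFinset] at hY ⊢
    obtain ⟨hmem, hsum⟩ := hY
    refine ⟨⟨?_, ?_⟩, ?_⟩
    · intro i
      rcases Fin.eq_zero_or_eq_succ i with h | ⟨i', rfl⟩
      · subst h; simpa using he
      · simpa using hmem i'
    · rw [Fin.sum_univ_succ]
      simp [hsum]
    · simp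
  · intro X hX
    simp only [Finset.mem_coe, Finset.mem_filter] at hX
    rw [← hX.2]
    exact Fin.cons_self_tail X
  · intro Y _
    simp

/-- delta function -/
def dd (q : ℤ) : ℤ := if q = 0 then 1 else 0

lemma ff_diff (c : ℤ) (hc : 1 ≤ c) (N : ℕ) (w : ℤ) :
    (ff c (N+1) w : ℤ) - (ff c (N+1) (w-1) : ℤ)
      = (ff c N (w + c) : ℤ) - (ff c N (w - c - 1) : ℤ) := by
  rw [ff_succ, ff_succ]
  push_cast
  rw [← Finset.sum_sub_distrib]
  have h : ∀ e ∈ Finset.Icc (-c) c,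
      ((ff c N (w - e) : ℤ) - (ff c N (w - 1 - e) : ℤ))
        = (fun x => -(ff c N (w - x - 1) : ℤ)) e - (fun x => -(ff c N (w - x - 1) : ℤ)) (e-1) := by
    intro e _
    have a1 : w - (e-1) - 1 = w - e := by ring
    have a2 : w - 1 - e = w - e - 1 := by ring
    simp only [a1, a2]
    ring
  rw [Finset.sum_congr rfl h, telescope _ (-c) c (by omega)]
  have a3 : w - (-c - 1) - 1 = w + c := by ring
  simp only [a3]
  ring

lemma diffIter (c : ℤ) (hc : 1 ≤ c) : ∀ N : ℕ, ∀ t : ℤ,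
    ∑ r ∈ range (N+1), (-1:ℤ)^r * (N.choose r : ℤ) * (ff c N (t - r) : ℤ)
      = ∑ r ∈ range (N+1), (-1:ℤ)^r * (N.choose r : ℤ) * dd (t + (N:ℤ)*c - r*(2*c+1)) := by
  intro N
  induction N with
  | zero =>
    intro t
    simp [ff_zero, dd]
  | succ N IH =>
    intro t
    have lhs : ∑ r ∈ range (N+2), (-1:ℤ)^r * ((N+1).choose r : ℤ) * (ff c (N+1) (t - r) : ℤ)
        = ∑ r ∈ range (N+1), (-1:ℤ)^r * (N.choose r : ℤ)
            * ((ff c N (t + c - r) : ℤ) - (ff c N (t - c - 1 - r) : ℤ)) := by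
      rw [pascalStep N (fun r => (ff c (N+1) (t - r) : ℤ))]
      apply Finset.sum_congr rfl
      intro r _
      congr 1
      have h1 : (t - ((r:ℤ) + 1)) = t - r - 1 := by ring
      have h2 := ff_diff c hc N (t - r)
      push_cast
      rw [h1, show (t - (r:ℤ) - 1) = (t - r) - 1 from by ring, h2,
        show (t - (r:ℤ) + c) = t + c - r from by ring,
        show (t - (r:ℤ) - c - 1) = t - c - 1 - r from by ring]
    have rhs : ∑ r ∈ range (N+2), (-1:ℤ)^r * ((N+1).choose r : ℤ)
          * dd (t + ((N:ℤ)+1)*c - r*(2*c+1))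
        = ∑ r ∈ range (N+1), (-1:ℤ)^r * (N.choose r : ℤ)
            * (dd (t + c + (N:ℤ)*c - r*(2*c+1)) - dd (t - c - 1 + (N:ℤ)*c - r*(2*c+1))) := by
      rw [pascalStep N (fun r => dd (t + ((N:ℤ)+1)*c - r*(2*c+1)))]
      apply Finset.sum_congr rfl
      intro r _
      congr 1
      congr 1
      · congr 1; ring
      · congr 1; push_cast; ring
    have mid : ∑ r ∈ range (N+1), (-1:ℤ)^r * (N.choose r : ℤ)
            * ((ff c N (t + c - r) : ℤ) - (ff c N (t - c - 1 - r) : ℤ))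
        = ∑ r ∈ range (N+1), (-1:ℤ)^r * (N.choose r : ℤ)
            * (dd (t + c + (N:ℤ)*c - r*(2*c+1)) - dd (t - c - 1 + (N:ℤ)*c - r*(2*c+1))) := by
      rw [Finset.sum_congr rfl (fun r _ => mul_sub ((-1:ℤ)^r * (N.choose r : ℤ)) _ _),
        Finset.sum_sub_distrib, IH (t + c), IH (t - c - 1),
        ← Finset.sum_sub_distrib]
      exact Finset.sum_congr rfl fun r _ => by rw [mul_sub]
    have e1 : ((N:ℤ)+1) = ((N+1 : ℕ) : ℤ) := by push_cast; ring
    rw [show N+1+1 = N+2 from rfl]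
    rw [← e1] at *
    rw [lhs, mid, ← rhs]

lemma half_eq (c : ℤ) : ((2*c+1) - 1)/2 = c := by
  rw [show (2*c+1) - 1 = 2*c from by ring]
  omega

lemma balN_decomp (c : ℤ) (hc : 1 ≤ c) (n : ℕ) (i k : ℤ) :
    balN (2*c+1) n i k
      = ∑ s ∈ Finset.Icc (k*(2*c+1) - c) (k*(2*c+1) + c), ff c n (s - i) := by
  unfold balN
  rw [half_eq]
  have hfib : ∀ X ∈ Finset.filter
        (fun X : Fin n → ℤ =>
          k * (2*c+1) - c ≤ i + ∑ l, X l ∧ i + ∑ l, X l ≤ k * (2*c+1) + c)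
        (Fintype.piFinset fun _ : Fin n => Finset.Icc (-c) c),
      (fun X : Fin n → ℤ => i + ∑ l, X l) X ∈
        Finset.Icc (k*(2*c+1) - c) (k*(2*c+1) + c) := by
    intro X hX
    simp only [Finset.mem_filter] at hX
    rw [Finset.mem_Icc]
    exact ⟨hX.2.1, hX.2.2⟩
  rw [Finset.card_eq_sum_card_fiberwise hfib]
  apply Finset.sum_congr rfl
  intro s hs
  rw [Finset.mem_Icc] at hs
  unfold ff
  rw [Finset.filter_filter]
  congr 1
  apply Finset.filter_congr
  intro X _
  constructor
  · rintro ⟨⟨_, _⟩, h⟩; omega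
  · intro h
    simp only [eq_comm] at h ⊢
    constructor
    · constructor <;> omega
    · omega

lemma balN_vanish (c : ℤ) (hc : 1 ≤ c) (n : ℕ) (q k : ℤ)
    (h : k*(2*c+1) + c + (n:ℤ)*c < q) : balN (2*c+1) n q k = 0 := by
  unfold balN
  rw [Finset.card_eq_zero, Finset.filter_eq_empty_iff]
  intro X hX
  rw [Fintype.mem_piFinset] at hX
  have hlow : -((n:ℤ)*c) ≤ ∑ l, X l := by
    have : ∑ l : Fin n, (-c) ≤ ∑ l, X l := by
      apply Finset.sum_le_sum
      intro l _
      have := hX l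
      rw [half_eq] at this
      rw [Finset.mem_Icc] at this
      exact this.1
    simpa using this
  rw [half_eq]
  intro hcon
  omega

/-- the eigenvector in `gg` form -/
def vt (n d : ℕ) (m : ℤ) (i : ℤ) : ℤ :=
  ∑ r ∈ range (n+1), (-1:ℤ)^r * (n.choose r : ℤ) * gg d (i + m - r)

lemma leftEig_eq_vt (m : ℕ) (hm : 1 ≤ m) (j : ℕ) (hj : j ≤ 2*m) (i : ℤ)
    (h1 : -(m:ℤ) ≤ i) (h2 : i ≤ (m:ℤ)) :
    leftEig (2*m) j i = vt (2*m) (2*m - j) (m:ℤ) i := by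
  set n : ℕ := 2*m with hn
  set d : ℕ := n - j with hd
  have hhalf : ((n:ℕ):ℤ)/2 = (m:ℤ) := by
    rw [hn]; push_cast; omega
  have hu : ((i + (n:ℤ)/2).toNat : ℤ) = i + m := by
    rw [hhalf]; omega
  set u : ℕ := (i + (n:ℤ)/2).toNat with hudef
  have hun : u ≤ n := by omega
  have step1 : leftEig n j i
      = ∑ r ∈ range (u+1), (-1:ℤ)^r * ((n+1).choose r : ℤ) * sig d (i + m - r) := by
    unfold leftEig
    apply Finset.sum_congr rfl
    intro r hr
    rw [mem_range] at hr
    congr 1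
    unfold sig
    rw [if_pos (by omega)]
    congr 1
    push_cast [hn]
    ring
  have step2 : ∑ r ∈ range (u+1), (-1:ℤ)^r * ((n+1).choose r : ℤ) * sig d (i + m - r)
      = ∑ r ∈ range (n+2), (-1:ℤ)^r * ((n+1).choose r : ℤ) * sig d (i + m - r) := by
    apply Finset.sum_subset (by
      apply Finset.range_subset_range.mpr; omega)
    intro r _ hr
    rw [mem_range] at hr
    push_neg at hr
    have : sig d (i + m - r) = 0 := by
      unfold sig; rw [if_neg (by omega)]
    rw [this, mul_zero]
  have step3 : ∑ r ∈ range (n+2), (-1:ℤ)^r * ((n+1).choose r : ℤ) * sig d (i + m - r)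
      = ∑ r ∈ range (n+1), (-1:ℤ)^r * (n.choose r : ℤ) * gg d (i + m - r) := by
    rw [pascalStep n (fun r => sig d (i + m - r))]
    apply Finset.sum_congr rfl
    intro r _
    congr 1
    unfold gg
    congr 1
    congr 1
    push_cast
    ring
  rw [step1, step2, step3]
  rfl

lemma vt_vanish_above (m : ℕ) (j : ℕ) (hj : j ≤ 2*m) (i : ℤ) (h : (m:ℤ) + 1 ≤ i) :
    vt (2*m) (2*m - j) (m:ℤ) i = 0 := by
  set n : ℕ := 2*m with hn
  set d : ℕ := n - j with hd
  unfold vt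
  have hrev : ∑ r ∈ range (n+1), (-1:ℤ)^r * (n.choose r : ℤ) * gg d (i + m - r)
      = ∑ r ∈ range (n+2), (-1:ℤ)^r * ((n+1).choose r : ℤ) * sig d (i + m - r) := by
    rw [pascalStep n (fun r => sig d (i + m - r))]
    apply Finset.sum_congr rfl
    intro r _
    congr 1
    unfold gg
    congr 1
    congr 1
    push_cast
    ring
  rw [hrev]
  have hpoly : ∀ r ∈ range (n+2), (-1:ℤ)^r * ((n+1).choose r : ℤ) * sig d (i + m - r)
      = (-1:ℤ)^r * ((n+1).choose r : ℤ) * ((2*(i+m)+1) + (-2) * r) ^ d := by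
    intro r hr
    rw [mem_range] at hr
    congr 1
    unfold sig
    rw [if_pos (by omega)]
    congr 1
    ring
  rw [Finset.sum_congr rfl hpoly]
  exact altVanish d (n+1) (by omega) (2*(i+m)+1) (-2)

lemma sum_shift (f : ℤ → ℤ) (a bd r : ℤ) :
    ∑ i ∈ Finset.Icc a bd, f i = ∑ i ∈ Finset.Icc (a - r) (bd - r), f (i + r) := by
  have h : Finset.Icc a bd = (Finset.Icc (a - r) (bd - r)).map (addRightEmbedding r) := by
    rw [Finset.map_add_right_Icc]
    congr 1 <;> ring
  rw [h, Finset.sum_map]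
  rfl

theorem main_int (c : ℤ) (hc : 1 ≤ c) (m : ℕ) (hm : 1 ≤ m) (j : ℕ) (hj : j ≤ 2*m)
    (k : ℤ) (hk1 : -(m:ℤ) ≤ k) (hk2 : k ≤ (m:ℤ)) :
    ∑ i ∈ Finset.Icc (-(m:ℤ)) (m:ℤ),
        vt (2*m) (2*m - j) (m:ℤ) i * (balN (2*c+1) (2*m) i k : ℤ)
      = (2*c+1)^(2*m - j) * vt (2*m) (2*m - j) (m:ℤ) k := by
  set n : ℕ := 2*m with hn
  set d : ℕ := n - j with hd
  set b : ℤ := 2*c+1 with hb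
  have hb3 : 3 ≤ b := by omega
  set B : ℤ := 2*(n:ℤ)*b + (n:ℤ)*c + c + (n:ℤ) + 5 with hB
  have hnm : (n:ℤ) = 2*(m:ℤ) := by rw [hn]; push_cast; ring
  have hBbig : (m:ℤ) ≤ B := by nlinarith [hnm]
  -- A1 : extend the sum
  have A1 : ∑ i ∈ Finset.Icc (-(m:ℤ)) (m:ℤ), vt n d (m:ℤ) i * (balN b n i k : ℤ)
      = ∑ i ∈ Finset.Icc (-(m:ℤ)) B, vt n d (m:ℤ) i * (balN b n i k : ℤ) := by
    apply Finset.sum_subset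
    · rw [Finset.Icc_subset_Icc_iff (by omega)]
      omega
    · intro x hx hx2
      rw [Finset.mem_Icc] at hx hx2
      have : vt n d (m:ℤ) x = 0 := vt_vanish_above m j hj x (by omega)
      rw [this, zero_mul]
  rw [A1]
  -- A2 : expand vt and swap sums
  have A2 : ∑ i ∈ Finset.Icc (-(m:ℤ)) B, vt n d (m:ℤ) i * (balN b n i k : ℤ)
      = ∑ r ∈ range (n+1), (-1:ℤ)^r * (n.choose r : ℤ) *
          ∑ i ∈ Finset.Icc (-(m:ℤ)) B, gg d (i + (m:ℤ) - r) * (balN b n i k : ℤ) := by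
    unfold vt
    have e1 : ∀ i : ℤ, (∑ r ∈ range (n+1), (-1:ℤ)^r * (n.choose r:ℤ) * gg d (i + m - r))
          * (balN b n i k : ℤ)
        = ∑ r ∈ range (n+1), (-1:ℤ)^r * (n.choose r:ℤ)
            * (gg d (i + m - r) * (balN b n i k : ℤ)) := by
      intro i; rw [Finset.sum_mul]; exact sum_congr rfl fun r _ => by ring
    rw [Finset.sum_congr rfl (fun i _ => e1 i), Finset.sum_comm]
    exact sum_congr rfl fun r _ => by rw [Finset.mul_sum]
  rw [A2]
  -- A3 : shift the index in the inner sum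
  have A3 : ∀ r ∈ range (n+1),
      ∑ i ∈ Finset.Icc (-(m:ℤ)) B, gg d (i + (m:ℤ) - r) * (balN b n i k : ℤ)
        = ∑ i ∈ Finset.Icc (-(m:ℤ)) B, gg d (i + (m:ℤ)) * (balN b n (i + r) k : ℤ) := by
    intro r hr
    rw [mem_range] at hr
    rw [sum_shift (fun i => gg d (i + (m:ℤ) - r) * (balN b n i k : ℤ)) (-(m:ℤ)) B (r:ℤ)]
    have e2 : ∀ i : ℤ, gg d (i + (r:ℤ) + (m:ℤ) - r) * (balN b n (i + r) k : ℤ)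
        = gg d (i + (m:ℤ)) * (balN b n (i + r) k : ℤ) := by
      intro i; congr 2; ring
    rw [Finset.sum_congr rfl (fun i _ => e2 i)]
    -- now compare Icc (-(m)-r) (B-r) with Icc (-m) B
    have hup : ∀ q : ℤ, B < q → (balN b n q k : ℤ) = 0 := by
      intro q hq
      rw [balN_vanish c hc n q k (by nlinarith [hnm])]
      rfl
    have sub1 : ∑ i ∈ Finset.Icc (-(m:ℤ) - r) (B - r),
          gg d (i + (m:ℤ)) * (balN b n (i + r) k : ℤ)
        = ∑ i ∈ Finset.Icc (-(m:ℤ) - r) B,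
          gg d (i + (m:ℤ)) * (balN b n (i + r) k : ℤ) := by
      apply Finset.sum_subset
      · rw [Finset.Icc_subset_Icc_iff (by omega)]; omega
      · intro x hx hx2
        rw [Finset.mem_Icc] at hx hx2
        rw [hup (x + r) (by omega), mul_zero]
    have sub2 : ∑ i ∈ Finset.Icc (-(m:ℤ)) B,
          gg d (i + (m:ℤ)) * (balN b n (i + r) k : ℤ)
        = ∑ i ∈ Finset.Icc (-(m:ℤ) - r) B,
          gg d (i + (m:ℤ)) * (balN b n (i + r) k : ℤ) := by
      apply Finset.sum_subset
      · rw [Finset.Icc_subset_Icc_iff (by omega)]; omega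
      · intro x hx hx2
        rw [Finset.mem_Icc] at hx hx2
        rw [gg_neg d _ (by omega), zero_mul]
    rw [sub1, ← sub2]
  rw [Finset.sum_congr rfl (fun r hr => by rw [A3 r hr])]
  -- A4 : swap back
  have A4 : ∑ r ∈ range (n+1), (-1:ℤ)^r * (n.choose r : ℤ) *
        ∑ i ∈ Finset.Icc (-(m:ℤ)) B, gg d (i + (m:ℤ)) * (balN b n (i + r) k : ℤ)
      = ∑ i ∈ Finset.Icc (-(m:ℤ)) B, gg d (i + (m:ℤ)) *
          ∑ r ∈ range (n+1), (-1:ℤ)^r * (n.choose r : ℤ) * (balN b n (i + r) k : ℤ) := by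
    simp_rw [Finset.mul_sum]
    rw [Finset.sum_comm]
    exact sum_congr rfl fun i _ => sum_congr rfl fun r _ => by ring
  rw [A4]
  -- A5 : inner alternating sum of balN via diffIter
  have A5 : ∀ i : ℤ, ∑ r ∈ range (n+1), (-1:ℤ)^r * (n.choose r : ℤ) * (balN b n (i + r) k : ℤ)
      = ∑ r ∈ range (n+1), (-1:ℤ)^r * (n.choose r : ℤ) *
          (if (i - (n:ℤ)*c + r*b) ∈ Finset.Icc (k*b - c) (k*b + c) then (1:ℤ) else 0) := by
    intro i
    have e3 : ∀ r ∈ range (n+1), (-1:ℤ)^r * (n.choose r : ℤ) * (balN b n (i + r) k : ℤ)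
        = (-1:ℤ)^r * (n.choose r : ℤ) *
            ∑ s ∈ Finset.Icc (k*b - c) (k*b + c), (ff c n (s - i - r) : ℤ) := by
      intro r _
      rw [hb, balN_decomp c hc n (i + r) k]
      push_cast
      congr 1
      exact sum_congr rfl fun s _ => by rw [show s - (i + (r:ℤ)) = s - i - r from by ring]
    rw [Finset.sum_congr rfl e3]
    have swap1 : ∑ r ∈ range (n+1), (-1:ℤ)^r * (n.choose r : ℤ) *
          ∑ s ∈ Finset.Icc (k*b - c) (k*b + c), (ff c n (s - i - r) : ℤ)
        = ∑ s ∈ Finset.Icc (k*b - c) (k*b + c),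
            ∑ r ∈ range (n+1), (-1:ℤ)^r * (n.choose r : ℤ) * (ff c n ((s - i) - r) : ℤ) := by
      simp_rw [Finset.mul_sum]
      rw [Finset.sum_comm]
    rw [swap1]
    have e4 : ∀ s ∈ Finset.Icc (k*b - c) (k*b + c),
        ∑ r ∈ range (n+1), (-1:ℤ)^r * (n.choose r : ℤ) * (ff c n ((s - i) - r) : ℤ)
          = ∑ r ∈ range (n+1), (-1:ℤ)^r * (n.choose r : ℤ) * dd ((s - i) + (n:ℤ)*c - r*b) := by
      intro s _
      rw [diffIter c hc n (s - i), hb]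
    rw [Finset.sum_congr rfl e4, Finset.sum_comm]
    apply sum_congr rfl
    intro r _
    rw [← Finset.mul_sum]
    congr 1
    have e5 : ∀ s ∈ Finset.Icc (k*b - c) (k*b + c),
        dd ((s - i) + (n:ℤ)*c - r*b) = if s = i - (n:ℤ)*c + r*b then (1:ℤ) else 0 := by
      intro s _
      unfold dd
      have hiff : (s - i + (n:ℤ)*c - (r:ℤ)*b = 0) ↔ (s = i - (n:ℤ)*c + (r:ℤ)*b) := by
        constructor <;> intro h <;> omega
      simp only [hiff]
    rw [Finset.sum_congr rfl e5, Finset.sum_ite_eq' (Finset.Icc (k*b - c) (k*b + c))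
      (i - (n:ℤ)*c + r*b) (fun _ => (1:ℤ))]
  rw [Finset.sum_congr rfl (fun i _ => by rw [A5 i])]
  -- A6-A8 : window sums
  have hnc : (n:ℤ)*c = (m:ℤ)*b - m := by rw [hnm, hb]; ring
  have swap2 : ∑ i ∈ Finset.Icc (-(m:ℤ)) B, gg d (i + (m:ℤ)) *
        ∑ r ∈ range (n+1), (-1:ℤ)^r * (n.choose r : ℤ) *
          (if (i - (n:ℤ)*c + r*b) ∈ Finset.Icc (k*b - c) (k*b + c) then (1:ℤ) else 0)
      = ∑ r ∈ range (n+1), (-1:ℤ)^r * (n.choose r : ℤ) *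
          ∑ i ∈ Finset.Icc (-(m:ℤ)) B, gg d (i + (m:ℤ)) *
            (if (i - (n:ℤ)*c + r*b) ∈ Finset.Icc (k*b - c) (k*b + c) then (1:ℤ) else 0) := by
    simp_rw [Finset.mul_sum]
    rw [Finset.sum_comm]
    exact sum_congr rfl fun r _ => sum_congr rfl fun i _ => by ring
  rw [swap2]
  have A67 : ∀ r ∈ range (n+1),
      ∑ i ∈ Finset.Icc (-(m:ℤ)) B, gg d (i + (m:ℤ)) *
          (if (i - (n:ℤ)*c + r*b) ∈ Finset.Icc (k*b - c) (k*b + c) then (1:ℤ) else 0)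
        = b^d * gg d (k + (m:ℤ) - r) := by
    intro r hr
    rw [mem_range] at hr
    set w : ℤ := k*b + (n:ℤ)*c - r*b with hw
    have hcond : ∀ i : ℤ, ((i - (n:ℤ)*c + r*b) ∈ Finset.Icc (k*b - c) (k*b + c))
        ↔ (i ∈ Finset.Icc (w - c) (w + c)) := by
      intro i
      rw [Finset.mem_Icc, Finset.mem_Icc, hw]
      constructor <;> intro h <;> constructor <;> linarith [h.1, h.2]
    have e6 : ∀ i ∈ Finset.Icc (-(m:ℤ)) B, gg d (i + (m:ℤ)) *
          (if (i - (n:ℤ)*c + r*b) ∈ Finset.Icc (k*b - c) (k*b + c) then (1:ℤ) else 0)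
        = if i ∈ Finset.Icc (w - c) (w + c) then gg d (i + (m:ℤ)) else 0 := by
      intro i _
      rw [if_congr (hcond i) rfl rfl, mul_ite, mul_one, mul_zero]
    rw [Finset.sum_congr rfl e6, Finset.sum_ite_mem]
    have hsub : ∑ i ∈ Finset.Icc (-(m:ℤ)) B ∩ Finset.Icc (w - c) (w + c), gg d (i + (m:ℤ))
        = ∑ i ∈ Finset.Icc (w - c) (w + c), gg d (i + (m:ℤ)) := by
      apply Finset.sum_subset Finset.inter_subset_right
      intro x hx hx2
      rw [Finset.mem_Icc] at hx
      have hxs : x ∉ Finset.Icc (-(m:ℤ)) B := by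
        intro hmem
        exact hx2 (Finset.mem_inter.mpr ⟨hmem, Finset.mem_Icc.mpr hx⟩)
      rw [Finset.mem_Icc] at hxs
      push_neg at hxs
      have hwB : w + c ≤ B := by
        rw [hw, hB]
        have h1 : k*b ≤ (n:ℤ)*b := by
          apply mul_le_mul_of_nonneg_right _ (by omega)
          omega
        have h2 : 0 ≤ (r:ℤ)*b := by positivity
        have h3 : 0 ≤ (n:ℤ)*b := by positivity
        linarith
      have hxm : x < -(m:ℤ) := by
        rcases lt_or_ge x (-(m:ℤ)) with h | h
        · exact h
        · exfalso; have := hxs h; omega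
      rw [gg_neg d _ (by omega)]
    rw [hsub]
    have hshift : ∑ i ∈ Finset.Icc (w - c) (w + c), gg d (i + (m:ℤ))
        = ∑ i ∈ Finset.Icc ((k + (m:ℤ) - r) * b - c) ((k + (m:ℤ) - r) * b + c), gg d i := by
      have hub : (k + (m:ℤ) - r) * b = w + m := by
        have expand : (k + (m:ℤ) - r) * b = k*b + (m:ℤ)*b - (r:ℤ)*b := by ring
        rw [hw, expand]
        linarith [hnc]
      rw [hub, sum_shift (gg d) (w + (m:ℤ) - c) (w + (m:ℤ) + c) (m:ℤ)]
      apply Finset.sum_congr _ (fun _ _ => rfl)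
      congr 1 <;> ring
    rw [hshift]
    rw [hb]
    have := windowSum c hc d (k + (m:ℤ) - r)
    rw [← hb] at this ⊢
    exact this
  have A8 : ∑ r ∈ range (n+1), (-1:ℤ)^r * (n.choose r : ℤ) *
        ∑ i ∈ Finset.Icc (-(m:ℤ)) B, gg d (i + (m:ℤ)) *
          (if (i - (n:ℤ)*c + r*b) ∈ Finset.Icc (k*b - c) (k*b + c) then (1:ℤ) else 0)
      = ∑ r ∈ range (n+1), (-1:ℤ)^r * (n.choose r : ℤ) * (b^d * gg d (k + (m:ℤ) - r)) :=
    Finset.sum_congr rfl (fun r hr => by rw [A67 r hr])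
  rw [A8]
  have final : ∑ r ∈ range (n+1), (-1:ℤ)^r * (n.choose r : ℤ) * (b^d * gg d (k + (m:ℤ) - r))
      = b^d * vt n d (m:ℤ) k := by
    unfold vt
    rw [Finset.mul_sum]
    exact sum_congr rfl fun r _ => by ring
  rw [final]

theorem stmt2 (b : ℤ) (hodd : Odd b) (hb : 3 ≤ b) (n : ℕ) (hneven : Even n) (hn : 2 ≤ n)
    (j : ℕ) (hj : j ≤ n)
    (k : ℤ) (hk1 : -(n : ℤ) / 2 ≤ k) (hk2 : k ≤ (n : ℤ) / 2) :
    ∑ i ∈ Finset.Icc (-(n : ℤ) / 2) ((n : ℤ) / 2),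
        (leftEig n j i : ℚ) * balK b n i k
      = (1 / (b : ℚ) ^ j) * (leftEig n j k : ℚ) := by
  obtain ⟨c, hcb⟩ := hodd
  have hc : 1 ≤ c := by omega
  obtain ⟨m, hnm'⟩ := hneven
  have hn2m : n = 2*m := by omega
  have hm : 1 ≤ m := by omega
  subst hcb hn2m
  have e1 : (-((2*m:ℕ):ℤ))/2 = -(m:ℤ) := by push_cast; omega
  have e2 : (((2*m:ℕ):ℤ))/2 = (m:ℤ) := by push_cast; omega
  rw [e1] at hk1 ⊢
  rw [e2] at hk2 ⊢
  have hj' : j ≤ 2*m := hj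
  set d : ℕ := 2*m - j with hd
  set b : ℤ := 2*c+1 with hb2
  have hbQ : ((b:ℤ):ℚ) ≠ 0 := by
    rw [hb2]; push_cast
    intro hcon
    have h' : ((2*c+1 : ℤ) : ℚ) = ((0:ℤ):ℚ) := by push_cast; linarith
    have : (2*c+1 : ℤ) = 0 := Int.cast_injective h'
    omega
  -- rewrite summand
  have hsummand : ∀ i ∈ Finset.Icc (-(m:ℤ)) (m:ℤ),
      (leftEig (2*m) j i : ℚ) * balK b (2*m) i k
        = ((vt (2*m) d (m:ℤ) i * (balN b (2*m) i k : ℤ) : ℤ) : ℚ) / (b:ℚ)^(2*m) := by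
    intro i hi
    rw [Finset.mem_Icc] at hi
    rw [leftEig_eq_vt m hm j hj' i hi.1 hi.2]
    unfold balK
    push_cast
    ring
  rw [Finset.sum_congr rfl hsummand, ← Finset.sum_div, ← Int.cast_sum,
    main_int c hc m hm j hj' k hk1 hk2]
  rw [leftEig_eq_vt m hm j hj' k hk1 hk2]
  have hpow : (b:ℚ)^(2*m) = (b:ℚ)^d * (b:ℚ)^j := by
    rw [← pow_add, hd]
    congr 1
    omega
  push_cast
  rw [hpow]
  field_simp
  push_cast [hd]
  ring_nf
  push_cast
  rw [hb2]; push_cast; ring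
end

section
/- Fix an odd integer b ≥ 3 and an even integer n ≥ 2. Define π(i) = Ā(n, i+n/2)/(2^n · n!) for each integer i with -n/2 ≤ i ≤ n/2, where Ā(n,j) = Σ_{r=0}^{j} (-1)^r · C(n+1, r) · (2j-2r+1)^n. Then π is the stationary distribution of the balanced carries transition matrix K: Σ_{i=-n/2}^{n/2} π(i) = 1, and for every integer k with -n/2 ≤ k ≤ n/2, Σ_{i=-n/2}^{n/2} π(i) · K(i,k) = π(k). -/
open Finset

/-- `P n u = C(u+n, n)` for `u ≥ 0`, else `0`: #{x ∈ ℕ^n : Σx ≤ u}. -/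
def Pc (n : ℕ) (u : ℤ) : ℤ := if 0 ≤ u then ((u.toNat + n).choose n : ℤ) else 0

lemma Pc_neg {n : ℕ} {u : ℤ} (h : u < 0) : Pc n u = 0 := by
  simp [Pc, not_le.2 h]

lemma Pc_zero (n : ℕ) : Pc n 0 = 1 := by simp [Pc]

lemma Pc_succ (n : ℕ) (u : ℤ) : Pc (n+1) u = Pc (n+1) (u-1) + Pc n u := by
  rcases lt_trichotomy u 0 with h | h | h
  · rw [Pc_neg h, Pc_neg (by omega), Pc_neg h]; ring
  · subst h
    rw [Pc_zero, Pc_zero, Pc_neg (by omega)]; ring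
  · have h1 : (0:ℤ) ≤ u := le_of_lt h
    have h2 : (0:ℤ) ≤ u - 1 := by omega
    rw [Pc, Pc, Pc, if_pos h1, if_pos h2, if_pos h1]
    have ha : u.toNat + (n+1) = ((u-1).toNat + n + 1) + 1 := by omega
    have hb : (u-1).toNat + (n+1) = (u-1).toNat + n + 1 := by omega
    have hc : u.toNat + n = (u-1).toNat + n + 1 := by omega
    rw [ha, hb, hc, Nat.choose_succ_succ ((u-1).toNat + n + 1) n]
    push_cast
    ring

/-- The Pascal rearrangement for alternating binomial sums. -/
lemma pascal_sum (N : ℕ) (f : ℕ → ℤ) :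
    ∑ r ∈ range (N+2), (-1:ℤ)^r * ((N+1).choose r : ℤ) * f r
      = ∑ r ∈ range (N+1), (-1:ℤ)^r * (N.choose r : ℤ) * (f r - f (r+1)) := by
  have L : ∑ r ∈ range (N+2), (-1:ℤ)^r * ((N+1).choose r : ℤ) * f r
      = f 0 + ∑ r ∈ range (N+1), (-1:ℤ)^(r+1) * ((N+1).choose (r+1) : ℤ) * f (r+1) := by
    rw [Finset.sum_range_succ' (fun r => (-1:ℤ)^r * ((N+1).choose r : ℤ) * f r) (N+1)]
    simp [add_comm]
  rw [L]
  have key : ∀ r ∈ range (N+1), (-1:ℤ)^(r+1) * ((N+1).choose (r+1) : ℤ) * f (r+1)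
      = (-1:ℤ)^(r+1) * (N.choose r : ℤ) * f (r+1)
        + (-1:ℤ)^(r+1) * (N.choose (r+1) : ℤ) * f (r+1) := by
    intro r _
    rw [Nat.choose_succ_succ]
    push_cast
    ring
  rw [Finset.sum_congr rfl key, Finset.sum_add_distrib]
  have e1 : ∑ r ∈ range (N+1), (-1:ℤ)^(r+1) * (N.choose (r+1) : ℤ) * f (r+1)
      = (∑ r ∈ range (N+2), (-1:ℤ)^r * (N.choose r : ℤ) * f r) - f 0 := by
    rw [Finset.sum_range_succ' (fun r => (-1:ℤ)^r * (N.choose r : ℤ) * f r) (N+1)]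
    simp
  have e2 : ∑ r ∈ range (N+2), (-1:ℤ)^r * (N.choose r : ℤ) * f r
      = ∑ r ∈ range (N+1), (-1:ℤ)^r * (N.choose r : ℤ) * f r := by
    rw [Finset.sum_range_succ]
    simp [Nat.choose_eq_zero_of_lt (Nat.lt_succ_self N)]
  rw [e1, e2]
  have e3 : ∀ r ∈ range (N+1), (-1:ℤ)^(r+1) * (N.choose r : ℤ) * f (r+1)
      = -((-1:ℤ)^r * (N.choose r : ℤ) * f (r+1)) := by
    intro r _; ring
  rw [Finset.sum_congr rfl e3]
  simp only [mul_sub, Finset.sum_sub_distrib, Finset.sum_neg_distrib]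
  ring

/-- Finite differences kill low-degree powers, top degree gives `(-d)^N N!`. -/
lemma lemD (d : ℤ) : ∀ (N : ℕ), ∀ m ≤ N, ∀ x : ℤ,
    ∑ r ∈ range (N+1), (-1:ℤ)^r * (N.choose r : ℤ) * (x + d*r)^m
      = if m = N then (-d)^N * (N.factorial : ℤ) else 0 := by
  intro N
  induction N with
  | zero =>
    intro m hm x
    interval_cases m
    simp
  | succ N IH =>
    intro m hm x
    rw [pascal_sum N (fun r => (x + d*r)^m)]
    have expand : ∀ r ∈ range (N+1),
        (-1:ℤ)^r * (N.choose r : ℤ) * ((x + d*r)^m - (x + d*(r+1:ℕ))^m)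
        = ∑ t ∈ range m, -(d^(m-t) * (m.choose t : ℤ) *
            ((-1:ℤ)^r * (N.choose r : ℤ) * (x + d*r)^t)) := by
      intro r _
      have hp : (x + d*(r+1:ℕ))^m = ((x + d*r) + d)^m := by push_cast; ring_nf
      have hb : ((x + d*r) + d)^m
          = (∑ t ∈ range m, (x + d*r)^t * d^(m-t) * (m.choose t : ℤ)) + (x+d*r)^m := by
        rw [add_pow, Finset.sum_range_succ]
        simp only [Nat.sub_self, pow_zero, Nat.choose_self, Nat.cast_one, mul_one]
      rw [hp, hb]
      rw [show (x+d*r)^m - ((∑ t ∈ range m, (x + d*r)^t * d^(m-t) * (m.choose t : ℤ)) + (x+d*r)^m)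
        = ∑ t ∈ range m, -((x + d*r)^t * d^(m-t) * (m.choose t : ℤ)) by
          rw [Finset.sum_neg_distrib]; ring]
      rw [Finset.mul_sum]
      apply Finset.sum_congr rfl
      intro t _
      ring
    rw [Finset.sum_congr rfl expand, Finset.sum_comm]
    have inner : ∀ t ∈ range m,
        ∑ r ∈ range (N+1), -(d^(m-t) * (m.choose t : ℤ) *
            ((-1:ℤ)^r * (N.choose r : ℤ) * (x + d*r)^t))
        = -(d^(m-t) * (m.choose t : ℤ) * (if t = N then (-d)^N * (N.factorial : ℤ) else 0)) := by
      intro t ht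
      have htN : t ≤ N := by have := Finset.mem_range.1 ht; omega
      rw [Finset.sum_neg_distrib]
      have : ∑ r ∈ range (N+1), d^(m-t) * (m.choose t : ℤ) *
            ((-1:ℤ)^r * (N.choose r : ℤ) * (x + d*r)^t)
          = d^(m-t) * (m.choose t : ℤ) *
            ∑ r ∈ range (N+1), (-1:ℤ)^r * (N.choose r : ℤ) * (x + d*r)^t := by
        rw [Finset.mul_sum]
      rw [this, IH t htN x]
    rw [Finset.sum_congr rfl inner]
    by_cases h : m = N + 1
    case neg =>
      -- m ≤ N : every t < m has t ≠ N
      have : ∀ t ∈ range m, -(d^(m-t) * (m.choose t : ℤ) *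
          (if t = N then (-d)^N * (N.factorial : ℤ) else 0)) = 0 := by
        intro t ht
        have := Finset.mem_range.1 ht
        rw [if_neg (by omega : ¬ t = N)]
        ring
      rw [Finset.sum_congr rfl this, Finset.sum_const_zero, if_neg (by omega)]
    case pos =>
      subst h
      rw [Finset.sum_eq_single N]
      · rw [if_pos rfl, if_pos rfl]
        have : (N+1) - N = 1 := by omega
        rw [this, Nat.choose_succ_self_right]
        rw [Nat.factorial_succ]
        push_cast
        ring
      · intro t ht htN
        rw [if_neg htN]; ring
      · intro h; exact absurd (Finset.self_mem_range_succ N) h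

/-- Binomial inversion delta identity. -/
lemma lemQ (n : ℕ) (y : ℤ) :
    ∑ r ∈ range (n+2), (-1:ℤ)^r * ((n+1).choose r : ℤ) * Pc n (y - r)
      = if y = 0 then 1 else 0 := by
  induction n generalizing y with
  | zero =>
    rw [Finset.sum_range_succ, Finset.sum_range_succ, Finset.sum_range_zero]
    simp only [Pc, Nat.add_zero, Nat.choose_self, Nat.choose_zero_right, Nat.choose_one_right]
    push_cast
    split_ifs <;> omega
  | succ n IH =>
    have : (n + 1) + 2 = (n+1) + 2 := rfl
    rw [show n + 1 + 2 = (n+1) + 2 from rfl,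
      pascal_sum (n+1) (fun r => Pc (n+1) (y - r))]
    have key : ∀ r ∈ range (n+2),
        (-1:ℤ)^r * ((n+1).choose r : ℤ) * (Pc (n+1) (y - r) - Pc (n+1) (y - (r+1:ℕ)))
        = (-1:ℤ)^r * ((n+1).choose r : ℤ) * Pc n (y - r) := by
      intro r _
      have h1 : Pc (n+1) (y - r) = Pc (n+1) ((y - r) - 1) + Pc n (y - r) := Pc_succ n (y - r)
      have h2 : (y - (r+1:ℕ)) = (y - r) - 1 := by push_cast; ring
      rw [h2, h1]
      ring
    rw [Finset.sum_congr rfl key, IH y]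


/-- The signed Eulerian number `Ā(n,j) = Σ_{r=0}^{j} (-1)^r C(n+1,r) (2j-2r+1)^n`. -/
def signedEulerian (n j : ℕ) : ℤ :=
  ∑ r ∈ Finset.range (j + 1),
    (-1 : ℤ) ^ r * (Nat.choose (n + 1) r : ℤ) * (2 * (j : ℤ) - 2 * r + 1) ^ n

/-- The stationary distribution `π(i) = Ā(n, i+n/2)/(2^n n!)` of the balanced carries chain. -/
def balPi (n : ℕ) (i : ℤ) : ℚ :=
  (signedEulerian n (i + (n : ℤ) / 2).toNat : ℚ) / (2 ^ n * Nat.factorial n)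

/-- `Vq n u = (2u+1)^n` for `u ≥ 0`, else `0`. -/
def Vq (n : ℕ) (u : ℤ) : ℤ := if 0 ≤ u then (2*u+1)^n else 0

lemma triangle (H : ℕ → ℕ → ℤ) (J : ℕ) :
    ∑ j ∈ range (J+1), ∑ t ∈ range (j+1), H j t
      = ∑ t ∈ range (J+1), ∑ s ∈ range (J+1-t), H (t+s) t := by
  induction J with
  | zero => simp
  | succ J IH =>
    rw [Finset.sum_range_succ, IH]
    rw [Finset.sum_range_succ (fun t => ∑ s ∈ range (J+1+1-t), H (t+s) t) (J+1)]
    have e : ∀ t ∈ range (J+1), ∑ s ∈ range (J+1+1-t), H (t+s) t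
        = (∑ s ∈ range (J+1-t), H (t+s) t) + H (J+1) t := by
      intro t ht
      have hm := Finset.mem_range.1 ht
      have h1 : J+1+1-t = (J+1-t)+1 := by omega
      have h2 : t + (J+1-t) = J+1 := by omega
      rw [h1, Finset.sum_range_succ, h2]
    rw [Finset.sum_congr rfl e, Finset.sum_add_distrib]
    have h3 : J+1+1-(J+1) = 1 := by omega
    rw [h3, Finset.sum_range_one,
      Finset.sum_range_succ (fun t => H (J+1) t) (J+1)]
    simp [add_assoc]

lemma Abar_eq_sum_V (n j : ℕ) :
    signedEulerian n j
      = ∑ r ∈ range (n+2), (-1:ℤ)^r * ((n+1).choose r : ℤ) * Vq n ((j:ℤ) - r) := by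
  have hsub1 : range (j+1) ⊆ range (j+n+3) := Finset.range_subset_range.2 (by omega)
  have hsub2 : range (n+2) ⊆ range (j+n+3) := Finset.range_subset_range.2 (by omega)
  have conv1 : signedEulerian n j
      = ∑ r ∈ range (j+1), (-1:ℤ)^r * ((n+1).choose r : ℤ) * Vq n ((j:ℤ) - r) := by
    rw [signedEulerian]
    apply Finset.sum_congr rfl
    intro r hr
    have hr' := Finset.mem_range.1 hr
    rw [Vq, if_pos (by
      have : (r:ℤ) ≤ (j:ℤ) := by exact_mod_cast Nat.lt_succ_iff.1 hr'
      omega)]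
    ring_nf
  rw [conv1, Finset.sum_subset hsub1, ← Finset.sum_subset hsub2]
  · intro r _ hr
    have hr' : n + 2 ≤ r := by
      by_contra hc
      exact hr (Finset.mem_range.2 (by omega))
    rw [Nat.choose_eq_zero_of_lt (by omega)]
    push_cast; ring
  · intro r _ hr
    have hr' : j + 1 ≤ r := by
      by_contra hc
      exact hr (Finset.mem_range.2 (by omega))
    rw [Vq, if_neg (by
      have : (j:ℤ) < (r:ℤ) := by exact_mod_cast (by omega : j < r)
      omega)]
    ring

lemma Abar_vanish (n j : ℕ) (h : n < j) : signedEulerian n j = 0 := by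
  have e1 : signedEulerian n j
      = ∑ r ∈ range (n+2), (-1:ℤ)^r * ((n+1).choose r : ℤ) * ((2*(j:ℤ)+1) + (-2)*r)^n := by
    rw [signedEulerian, ← Finset.sum_subset (Finset.range_subset_range.2 (by omega : n+2 ≤ j+1))]
    · apply Finset.sum_congr rfl; intro r _; ring_nf
    · intro r _ hr
      have hr' : n + 2 ≤ r := by
        by_contra hc
        exact hr (Finset.mem_range.2 (by omega))
      rw [Nat.choose_eq_zero_of_lt (by omega)]
      push_cast; ring
  rw [e1, lemD (-2) (n+1) n (by omega) (2*(j:ℤ)+1), if_neg (by omega)]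

/-- cumulative signed-Eulerian sum. -/
def Sfun (n : ℕ) (j : ℤ) : ℤ :=
  ∑ r ∈ range (n+1), (-1:ℤ)^r * (n.choose r : ℤ) * Vq n (j - r)

lemma Sfun_telescope (n : ℕ) (j : ℕ) :
    Sfun n j - Sfun n ((j:ℤ)-1) = signedEulerian n j := by
  rw [Abar_eq_sum_V, pascal_sum n (fun r => Vq n ((j:ℤ) - r))]
  rw [Sfun, Sfun, ← Finset.sum_sub_distrib]
  apply Finset.sum_congr rfl
  intro r _
  have : (j:ℤ) - 1 - r = (j:ℤ) - (r+1:ℕ) := by push_cast; ring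
  rw [this]
  ring

lemma Sfun_at_neg_one (n : ℕ) : Sfun n (-1) = 0 := by
  rw [Sfun]
  apply Finset.sum_eq_zero
  intro r _
  rw [Vq, if_neg (by push_cast; omega)]
  ring

lemma sum_Abar_eq_Sfun (n J : ℕ) :
    ∑ j ∈ range (J+1), signedEulerian n j = Sfun n J := by
  induction J with
  | zero =>
    rw [Finset.sum_range_one, ← Sfun_telescope n 0]
    norm_num [Sfun_at_neg_one n]
  | succ J IH =>
    rw [Finset.sum_range_succ, IH, ← Sfun_telescope n (J+1)]
    have : ((J+1:ℕ):ℤ) - 1 = (J:ℤ) := by push_cast; ring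
    rw [this]
    push_cast
    ring

lemma sum_Abar (n : ℕ) :
    ∑ j ∈ range (n+1), signedEulerian n j = 2^n * (n.factorial : ℤ) := by
  rw [sum_Abar_eq_Sfun n n, Sfun]
  have e : ∀ r ∈ range (n+1), (-1:ℤ)^r * (n.choose r : ℤ) * Vq n ((n:ℤ) - r)
      = (-1:ℤ)^r * (n.choose r : ℤ) * ((2*(n:ℤ)+1) + (-2)*r)^n := by
    intro r hr
    have hr' := Finset.mem_range.1 hr
    rw [Vq, if_pos (by
      have : (r:ℤ) ≤ (n:ℤ) := by exact_mod_cast Nat.lt_succ_iff.1 hr'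
      omega)]
    ring_nf
  rw [Finset.sum_congr rfl e, lemD (-2) n n le_rfl (2*(n:ℤ)+1), if_pos rfl]
  norm_num

/-- Worpitzky-type identity: `∑_j Ā(n,j) P_n(u-j) = Vq n u`. -/
lemma lemW (n : ℕ) (u : ℤ) :
    ∑ j ∈ range (n+1), signedEulerian n j * Pc n (u - j) = Vq n u := by
  rcases lt_or_ge u 0 with hu | hu
  · rw [Vq, if_neg (by omega)]
    apply Finset.sum_eq_zero
    intro j _
    rw [Pc_neg (by push_cast; omega)]
    ring
  · set c := u.toNat with hc
    have hu' : (u:ℤ) = (c:ℤ) := by simp [hc, Int.toNat_of_nonneg hu]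
    set J := c + n + 1 with hJ
    -- extend the sum to range (J+1)
    have hsub : range (n+1) ⊆ range (J+1) := Finset.range_subset_range.2 (by omega)
    rw [Finset.sum_subset hsub (by
      intro j _ hj
      have hj' : n + 1 ≤ j := by
        by_contra hcon
        exact hj (Finset.mem_range.2 (by omega))
      rw [Abar_vanish n j (by omega)]
      ring)]
    -- unfold Ā and reflect the inner sum
    have e1 : ∀ j ∈ range (J+1), signedEulerian n j * Pc n (u - j)
        = ∑ t ∈ range (j+1),
            ((-1:ℤ)^(j-t) * ((n+1).choose (j-t) : ℤ) * (2*(t:ℤ)+1)^n * Pc n (u - j)) := by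
      intro j _
      rw [signedEulerian, Finset.sum_mul]
      rw [← Finset.sum_range_reflect
        (fun r => (-1:ℤ)^r * ((n+1).choose r : ℤ) * (2*(j:ℤ) - 2*r + 1)^n * Pc n (u - j)) (j+1)]
      apply Finset.sum_congr rfl
      intro t ht
      have ht' := Finset.mem_range.1 ht
      have h1 : j + 1 - 1 - t = j - t := by omega
      have h2 : ((j - t : ℕ) : ℤ) = (j:ℤ) - t := by
        push_cast [Nat.cast_sub (by omega : t ≤ j)]; ring
      rw [h1]
      have h3 : 2*(j:ℤ) - 2*((j-t:ℕ):ℤ) + 1 = 2*(t:ℤ)+1 := by rw [h2]; ring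
      rw [h3]
    rw [Finset.sum_congr rfl e1]
    rw [triangle (fun j t => (-1:ℤ)^(j-t) * ((n+1).choose (j-t) : ℤ) * (2*(t:ℤ)+1)^n * Pc n (u - j)) J]
    -- inner sums are delta functions
    have e2 : ∀ t ∈ range (J+1),
        (∑ s ∈ range (J+1-t),
          (-1:ℤ)^(t+s-t) * ((n+1).choose (t+s-t) : ℤ) * (2*(t:ℤ)+1)^n * Pc n (u - (t+s:ℕ)))
        = (2*(t:ℤ)+1)^n * (if u - t = 0 then 1 else 0) := by
      intro t ht
      have ht' := Finset.mem_range.1 ht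
      have e3 : ∀ s, (-1:ℤ)^(t+s-t) * ((n+1).choose (t+s-t) : ℤ) * (2*(t:ℤ)+1)^n * Pc n (u - (t+s:ℕ))
          = (2*(t:ℤ)+1)^n * ((-1:ℤ)^s * ((n+1).choose s : ℤ) * Pc n ((u - t) - s)) := by
        intro s
        have h1 : t + s - t = s := by omega
        have h2 : u - ((t+s:ℕ):ℤ) = (u - t) - s := by push_cast; ring
        rw [h1, h2]; ring
      have big : ∀ (M : ℕ), n+2 ≤ M → J+1-t ≤ M →
          ∑ s ∈ range (J+1-t), (-1:ℤ)^s * ((n+1).choose s : ℤ) * Pc n ((u - t) - s)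
          = ∑ s ∈ range M, (-1:ℤ)^s * ((n+1).choose s : ℤ) * Pc n ((u - t) - s) := by
        intro M hM1 hM2
        apply Finset.sum_subset (Finset.range_subset_range.2 hM2)
        intro s _ hs
        have hs' : J+1-t ≤ s := by
          by_contra hcon
          exact hs (Finset.mem_range.2 (by omega))
        have : u - t - s < 0 := by
          have h4 : (c:ℤ) < (t:ℤ) + s := by exact_mod_cast (by omega : c < t + s)
          omega
        rw [Pc_neg this]; ring
      calc ∑ s ∈ range (J+1-t),
            (-1:ℤ)^(t+s-t) * ((n+1).choose (t+s-t) : ℤ) * (2*(t:ℤ)+1)^n * Pc n (u - (t+s:ℕ))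
          = ∑ s ∈ range (J+1-t), (2*(t:ℤ)+1)^n *
              ((-1:ℤ)^s * ((n+1).choose s : ℤ) * Pc n ((u - t) - s)) := by
            exact Finset.sum_congr rfl (fun s _ => e3 s)
        _ = (2*(t:ℤ)+1)^n * ∑ s ∈ range (J+1-t),
              (-1:ℤ)^s * ((n+1).choose s : ℤ) * Pc n ((u - t) - s) := by
            rw [Finset.mul_sum]
        _ = (2*(t:ℤ)+1)^n * ∑ s ∈ range (n+2),
              (-1:ℤ)^s * ((n+1).choose s : ℤ) * Pc n ((u - t) - s) := by
            rcases le_or_gt (J+1-t) (n+2) with hle | hlt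
            · rw [big (n+2) le_rfl hle]
            · congr 1
              refine (Finset.sum_subset (Finset.range_subset_range.2 (le_of_lt hlt)) ?_).symm
              intro s _ hs
              have hs' : n + 2 ≤ s := by
                by_contra hcon
                exact hs (Finset.mem_range.2 (by omega))
              rw [Nat.choose_eq_zero_of_lt (by omega)]
              push_cast; ring
        _ = (2*(t:ℤ)+1)^n * (if u - t = 0 then 1 else 0) := by rw [lemQ n (u - t)]
    rw [Finset.sum_congr rfl e2]
    -- only t = c survives
    rw [Finset.sum_eq_single c]
    · rw [if_pos (by omega), Vq, if_pos hu, hu']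
      ring
    · intro t _ htc
      rw [if_neg (by
        intro hcon
        exact htc (by omega))]
      ring
    · intro hcon
      exact absurd (Finset.mem_range.2 (by omega)) hcon

/-- `#{x ∈ {0,…,b-1}^n : Σ x ≤ M}`. -/
noncomputable def Lc (b : ℤ) (n : ℕ) (M : ℤ) : ℕ :=
  ((Fintype.piFinset fun _ : Fin n => Finset.Icc (0:ℤ) (b-1)).filter
    (fun x => ∑ k, x k ≤ M)).card

lemma Lc_zero (b : ℤ) (M : ℤ) : (Lc b 0 M : ℤ) = Pc 0 M := by
  rw [Lc, Pc]
  rcases le_or_gt 0 M with h | h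
  · rw [if_pos h]
    have : (Fintype.piFinset fun _ : Fin 0 => Finset.Icc (0:ℤ) (b-1)).filter
        (fun x => ∑ k, x k ≤ M) = Fintype.piFinset fun _ : Fin 0 => Finset.Icc (0:ℤ) (b-1) := by
      apply Finset.filter_true_of_mem
      intro x _
      simp only [Finset.univ_eq_empty, Finset.sum_empty]
      omega
    rw [this]
    simp
  · rw [if_neg (by omega)]
    have : (Fintype.piFinset fun _ : Fin 0 => Finset.Icc (0:ℤ) (b-1)).filter
        (fun x => ∑ k, x k ≤ M) = ∅ := by
      apply Finset.filter_false_of_mem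
      intro x _
      simp only [Finset.univ_eq_empty, Finset.sum_empty]
      omega
    rw [this]
    simp

lemma Lc_succ (b : ℤ) (n : ℕ) (M : ℤ) :
    Lc b (n+1) M = ∑ v ∈ Finset.Icc (0:ℤ) (b-1), Lc b n (M - v) := by
  rw [Lc]
  rw [Finset.card_filter]
  have key : ∑ x ∈ (Fintype.piFinset fun _ : Fin (n+1) => Finset.Icc (0:ℤ) (b-1)),
        (if ∑ k, x k ≤ M then 1 else 0)
      = ∑ p ∈ (Finset.Icc (0:ℤ) (b-1)) ×ˢ (Fintype.piFinset fun _ : Fin n => Finset.Icc (0:ℤ) (b-1)),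
        (if p.1 + ∑ k, p.2 k ≤ M then 1 else 0) := by
    apply Finset.sum_nbij' (fun x => (x 0, Fin.tail x)) (fun p => Fin.cons p.1 p.2)
    · intro x hx
      rw [Finset.mem_product]
      have := Fintype.mem_piFinset.1 hx
      constructor
      · exact this 0
      · exact Fintype.mem_piFinset.2 fun k => this k.succ
    · intro p hp
      rw [Finset.mem_product] at hp
      apply Fintype.mem_piFinset.2
      intro k
      refine Fin.cases ?_ ?_ k
      · simpa using hp.1
      · intro k'
        simpa using Fintype.mem_piFinset.1 hp.2 k'
    · intro x _
      exact Fin.cons_self_tail x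
    · intro p _
      simp
    · intro x _
      congr 1
      rw [Fin.sum_univ_succ]
      simp [Fin.tail]
  rw [key, Finset.sum_product]
  apply Finset.sum_congr rfl
  intro v _
  rw [Lc, Finset.card_filter]
  apply Finset.sum_congr rfl
  intro y _
  congr 1
  simp only [eq_iff_iff]
  constructor <;> intro h <;> linarith

/-- Closed form for the bounded-digit cumulative count. -/
lemma Lc_eq (b : ℤ) (hb : 1 ≤ b) (n : ℕ) (M : ℤ) :
    (Lc b n M : ℤ) = ∑ r ∈ range (n+1), (-1:ℤ)^r * (n.choose r : ℤ) * Pc n (M - r*b) := by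
  induction n generalizing M with
  | zero => simpa using Lc_zero b M
  | succ n IH =>
    have step : (Lc b (n+1) M : ℤ) = ∑ v ∈ Finset.Icc (0:ℤ) (b-1), (Lc b n (M - v) : ℤ) := by
      rw [Lc_succ]
      push_cast
      ring
    rw [step]
    have e1 : ∀ v ∈ Finset.Icc (0:ℤ) (b-1), (Lc b n (M - v) : ℤ)
        = ∑ r ∈ range (n+1), (-1:ℤ)^r * (n.choose r : ℤ) * Pc n (M - v - r*b) :=
      fun v _ => IH (M - v)
    rw [Finset.sum_congr rfl e1, Finset.sum_comm]
    -- inner telescoping over v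
    have e2 : ∀ r ∈ range (n+1),
        ∑ v ∈ Finset.Icc (0:ℤ) (b-1), (-1:ℤ)^r * (n.choose r : ℤ) * Pc n (M - v - r*b)
        = (-1:ℤ)^r * (n.choose r : ℤ) * (Pc (n+1) (M - r*b) - Pc (n+1) (M - (r+1)*b)) := by
      intro r _
      rw [← Finset.mul_sum]
      congr 1
      -- reindex Icc 0 (b-1) by range b.toNat
      have hb' : b = (b.toNat : ℤ) := by omega
      have reind : ∑ v ∈ Finset.Icc (0:ℤ) (b-1), Pc n (M - v - r*b)
          = ∑ v ∈ range b.toNat, Pc n (M - v - r*b) := by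
        apply Finset.sum_nbij' (fun v : ℤ => v.toNat) (fun v : ℕ => (v:ℤ))
        · intro v hv
          rw [Finset.mem_Icc] at hv
          exact Finset.mem_range.2 (by omega)
        · intro v hv
          rw [Finset.mem_range] at hv
          exact Finset.mem_Icc.2 (by omega)
        · intro v hv
          rw [Finset.mem_Icc] at hv
          omega
        · intro v _
          simp
        · intro v hv
          rw [Finset.mem_Icc] at hv
          congr 2
          omega
      rw [reind]
      have tel : ∀ v ∈ range b.toNat, Pc n (M - v - r*b)
          = Pc (n+1) (M - r*b - v) - Pc (n+1) (M - r*b - (v+1)) := by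
        intro v _
        have h := Pc_succ n (M - r*b - v)
        have e1 : M - (v:ℤ) - r*b = M - r*b - v := by ring
        have e2 : M - r*b - ((v:ℤ)+1) = M - r*b - (v:ℤ) - 1 := by ring
        rw [e1, e2]
        linarith [h]
      rw [Finset.sum_congr rfl tel]
      have tele := Finset.sum_range_sub (fun v : ℕ => -Pc (n+1) (M - r*b - v)) b.toNat
      have conv2 : ∀ v ∈ range b.toNat,
          Pc (n+1) (M - r*b - v) - Pc (n+1) (M - r*b - ((v:ℤ)+1))
          = -Pc (n+1) (M - r*b - ((v+1:ℕ):ℤ)) - -Pc (n+1) (M - r*b - v) := by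
        intro v _
        push_cast
        ring_nf
      rw [Finset.sum_congr rfl conv2, tele]
      have hcast : M - r*b - (b.toNat : ℤ) = M - ((r:ℤ)+1)*b := by
        rw [← hb']; ring
      have hcast2 : M - r*b - ((0:ℕ):ℤ) = M - r*b := by push_cast; ring
      rw [hcast, hcast2]
      ring
    rw [Finset.sum_congr rfl e2]
    rw [pascal_sum n (fun r => Pc (n+1) (M - r*b))]
    apply Finset.sum_congr rfl
    intro r _
    have : M - ((r+1:ℕ):ℤ)*b = M - ((r:ℤ)+1)*b := by push_cast; ring
    rw [this]

lemma balN_eq (b h : ℤ) (hh : 1 ≤ h) (hb : b = 2*h+1) (n : ℕ) (i k : ℤ) :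
    (balN b n i k : ℤ)
      = (Lc b n (k*b + h - i + (n:ℤ)*h) : ℤ) - (Lc b n (k*b - h - 1 - i + (n:ℤ)*h) : ℤ) := by
  have hdiv : (b-1)/2 = h := by omega
  have shift : balN b n i k
      = ((Fintype.piFinset fun _ : Fin n => Finset.Icc (0:ℤ) (b-1)).filter
          (fun x => k*b - h - i + (n:ℤ)*h ≤ ∑ m, x m ∧ ∑ m, x m ≤ k*b + h - i + (n:ℤ)*h)).card := by
    rw [balN]
    apply Finset.card_nbij' (fun X => fun m => X m + h) (fun x => fun m => x m - h)
    · intro X hX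
      rw [Finset.mem_coe, Finset.mem_filter] at hX ⊢
      have hX1 := Fintype.mem_piFinset.1 hX.1
      have hX2 := hX.2.1
      have hX3 := hX.2.2
      have hsum : ∑ m, (X m + h) = (∑ m, X m) + (n:ℤ)*h := by
        rw [Finset.sum_add_distrib, Finset.sum_const, Finset.card_univ, Fintype.card_fin]
        push_cast; ring
      constructor
      · apply Fintype.mem_piFinset.2
        intro m
        have := Finset.mem_Icc.1 (hX1 m)
        rw [hdiv] at this
        exact Finset.mem_Icc.2 (by beta_reduce; omega)
      · rw [hdiv] at hX2 hX3
        rw [hsum]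
        constructor <;> linarith
    · intro x hx
      rw [Finset.mem_coe, Finset.mem_filter] at hx ⊢
      have hx1 := Fintype.mem_piFinset.1 hx.1
      have hx2 := hx.2.1
      have hx3 := hx.2.2
      have hsum : ∑ m, (x m - h) = (∑ m, x m) - (n:ℤ)*h := by
        rw [Finset.sum_sub_distrib, Finset.sum_const, Finset.card_univ, Fintype.card_fin]
        push_cast; ring
      constructor
      · apply Fintype.mem_piFinset.2
        intro m
        have := Finset.mem_Icc.1 (hx1 m)
        rw [hdiv]
        exact Finset.mem_Icc.2 (by beta_reduce; omega)
      · rw [hdiv]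
        rw [hsum]
        constructor <;> linarith
    · intro X _; funext m; ring
    · intro x _; funext m; ring
  rw [shift]
  set S := Fintype.piFinset fun _ : Fin n => Finset.Icc (0:ℤ) (b-1) with hS
  set A := k*b - h - i + (n:ℤ)*h with hA
  set B := k*b + h - i + (n:ℤ)*h with hB
  have hsplit : S.filter (fun x => A ≤ ∑ m, x m ∧ ∑ m, x m ≤ B)
      = S.filter (fun x => ∑ m, x m ≤ B) \ S.filter (fun x => ∑ m, x m ≤ A - 1) := by
    ext x
    simp only [Finset.mem_filter, Finset.mem_sdiff, not_and]
    constructor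
    · rintro ⟨hm, h1, h2⟩
      exact ⟨⟨hm, h2⟩, fun _ hc => by linarith⟩
    · rintro ⟨⟨hm, h2⟩, h3⟩
      have h4 := h3 hm
      exact ⟨hm, by linarith, h2⟩
  have hsub : S.filter (fun x => ∑ m, x m ≤ A - 1) ⊆ S.filter (fun x => ∑ m, x m ≤ B) := by
    intro x hx
    rw [Finset.mem_filter] at hx ⊢
    have hAB : A - 1 ≤ B := by rw [hA, hB]; linarith
    exact ⟨hx.1, by linarith [hx.2]⟩
  rw [hsplit, Finset.card_sdiff_of_subset hsub]
  have hle := Finset.card_le_card hsub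
  have e1 : Lc b n B = (S.filter (fun x => ∑ m, x m ≤ B)).card := rfl
  have e2 : Lc b n (A-1) = (S.filter (fun x => ∑ m, x m ≤ A - 1)).card := rfl
  have e3 : k*b - h - 1 - i + (n:ℤ)*h = A - 1 := by rw [hA]; ring
  rw [e3, e1, e2, Nat.cast_sub hle]

lemma Phi (b : ℤ) (hb1 : 1 ≤ b) (n : ℕ) (c : ℤ) :
    ∑ j ∈ range (n+1), signedEulerian n j * (Lc b n (c - j) : ℤ)
      = ∑ r ∈ range (n+1), (-1:ℤ)^r * (n.choose r : ℤ) * Vq n (c - r*b) := by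
  have e1 : ∀ j ∈ range (n+1), signedEulerian n j * (Lc b n (c - j) : ℤ)
      = ∑ r ∈ range (n+1),
          (-1:ℤ)^r * (n.choose r : ℤ) * (signedEulerian n j * Pc n ((c - r*b) - j)) := by
    intro j _
    rw [Lc_eq b hb1 n (c - j), Finset.mul_sum]
    apply Finset.sum_congr rfl
    intro r _
    have : c - (j:ℤ) - r*b = (c - r*b) - j := by ring
    rw [this]
    ring
  rw [Finset.sum_congr rfl e1, Finset.sum_comm]
  apply Finset.sum_congr rfl
  intro r _
  rw [← Finset.mul_sum, lemW n (c - r*b)]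

lemma Vq_scale (b h : ℤ) (hh : 1 ≤ h) (hb : b = 2*h+1) (n : ℕ) (t : ℤ) :
    Vq n (b*t + h) = b^n * Vq n t := by
  rcases le_or_gt 0 t with ht | ht
  · rw [Vq, Vq, if_pos ht, if_pos (by nlinarith)]
    have : 2*(b*t+h)+1 = b*(2*t+1) := by rw [hb]; ring
    rw [this, mul_pow]
  · have hbt : b*t ≤ -b := by nlinarith
    rw [Vq, Vq, if_neg (by omega), if_neg (by omega)]
    ring

lemma main_id (b h : ℤ) (hh : 1 ≤ h) (hb : b = 2*h+1) (m n : ℕ) (hnm : n = 2*m)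
    (k : ℤ) (hk1 : -(m:ℤ) ≤ k) (hk2 : k ≤ m) :
    ∑ i ∈ Finset.Icc (-(m:ℤ)) (m:ℤ), signedEulerian n ((i + m).toNat) * (balN b n i k : ℤ)
      = b^n * signedEulerian n ((k + m).toNat) := by
  have hb1 : 1 ≤ b := by omega
  -- reindex to range (n+1)
  have reind : ∑ i ∈ Finset.Icc (-(m:ℤ)) (m:ℤ),
        signedEulerian n ((i + m).toNat) * (balN b n i k : ℤ)
      = ∑ j ∈ range (n+1), signedEulerian n j * (balN b n ((j:ℤ) - m) k : ℤ) := by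
    apply Finset.sum_nbij' (fun i : ℤ => (i + m).toNat) (fun j : ℕ => (j:ℤ) - m)
    · intro i hi
      rw [Finset.mem_Icc] at hi
      exact Finset.mem_range.2 (by omega)
    · intro j hj
      rw [Finset.mem_range] at hj
      exact Finset.mem_Icc.2 (by omega)
    · intro i hi
      rw [Finset.mem_Icc] at hi
      omega
    · intro j hj
      rw [Finset.mem_range] at hj
      omega
    · intro i hi
      rw [Finset.mem_Icc] at hi
      have hc : ((i + (m:ℤ)).toNat : ℤ) = i + m := by omega
      rw [hc]
      have h2 : i + (m:ℤ) - m = i := by ring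
      rw [h2]
  rw [reind]
  set C1 := k*b + h + m + (n:ℤ)*h with hC1
  set C0 := k*b - h - 1 + m + (n:ℤ)*h with hC0
  have e2 : ∀ j ∈ range (n+1), signedEulerian n j * (balN b n ((j:ℤ) - m) k : ℤ)
      = signedEulerian n j * (Lc b n (C1 - j) : ℤ)
        - signedEulerian n j * (Lc b n (C0 - j) : ℤ) := by
    intro j _
    rw [balN_eq b h hh hb n ((j:ℤ) - m) k]
    have g1 : k*b + h - ((j:ℤ) - m) + (n:ℤ)*h = C1 - j := by rw [hC1]; ring
    have g0 : k*b - h - 1 - ((j:ℤ) - m) + (n:ℤ)*h = C0 - j := by rw [hC0]; ring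
    rw [g1, g0]
    ring
  rw [Finset.sum_congr rfl e2, Finset.sum_sub_distrib, Phi b hb1 n C1, Phi b hb1 n C0]
  have hmz : ((n:ℤ))*h + m = m*b := by
    have : (n:ℤ) = 2*m := by exact_mod_cast hnm
    rw [this, hb]; ring
  have s1 : ∀ r ∈ range (n+1), (-1:ℤ)^r * (n.choose r : ℤ) * Vq n (C1 - r*b)
      = b^n * ((-1:ℤ)^r * (n.choose r : ℤ) * Vq n ((k + m) - r)) := by
    intro r _
    have : C1 - r*b = b*((k + m - r)) + h := by rw [hC1]; linear_combination hmz
    rw [this, Vq_scale b h hh hb n (k + m - r)]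
    have : k + (m:ℤ) - r = (k + m) - r := by ring
    rw [this]
    ring
  have s0 : ∀ r ∈ range (n+1), (-1:ℤ)^r * (n.choose r : ℤ) * Vq n (C0 - r*b)
      = b^n * ((-1:ℤ)^r * (n.choose r : ℤ) * Vq n ((k + m - 1) - r)) := by
    intro r _
    have : C0 - r*b = b*((k + m - 1 - r)) + h := by rw [hC0]; linear_combination hmz + hb
    rw [this, Vq_scale b h hh hb n (k + m - 1 - r)]
    have : k + (m:ℤ) - 1 - r = (k + m - 1) - r := by ring
    rw [this]
    ring
  rw [Finset.sum_congr rfl s1, Finset.sum_congr rfl s0, ← Finset.mul_sum, ← Finset.mul_sum]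
  have hS1 : ∑ r ∈ range (n+1), (-1:ℤ)^r * (n.choose r : ℤ) * Vq n ((k + m) - r)
      = Sfun n (k + m) := rfl
  have hS0 : ∑ r ∈ range (n+1), (-1:ℤ)^r * (n.choose r : ℤ) * Vq n ((k + m - 1) - r)
      = Sfun n (k + m - 1) := rfl
  rw [hS1, hS0, ← mul_sub]
  congr 1
  have htele := Sfun_telescope n ((k + m).toNat)
  have hcast : (((k + m).toNat : ℤ)) = k + m := by omega
  rw [hcast] at htele
  rw [← htele]

theorem stmt3 (b : ℤ) (hodd : Odd b) (hb : 3 ≤ b) (n : ℕ) (hneven : Even n) (hn : 2 ≤ n) :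
    (∑ i ∈ Finset.Icc (-(n : ℤ) / 2) ((n : ℤ) / 2), balPi n i = 1) ∧
    (∀ k : ℤ, -(n : ℤ) / 2 ≤ k → k ≤ (n : ℤ) / 2 →
      ∑ i ∈ Finset.Icc (-(n : ℤ) / 2) ((n : ℤ) / 2), balPi n i * balK b n i k = balPi n k) := by
  obtain ⟨t, ht⟩ := hodd
  have hh : 1 ≤ t := by omega
  obtain ⟨m0, hm0⟩ := hneven
  have hnm : n = 2*m0 := by omega
  have hncast : (n:ℤ) = 2*(m0:ℤ) := by exact_mod_cast hnm
  have hd1 : ((n:ℤ))/2 = (m0:ℤ) := by omega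
  have hd2 : (-(n:ℤ))/2 = -(m0:ℤ) := by omega
  have Dne : ((2:ℚ)^n * (n.factorial : ℚ)) ≠ 0 := by positivity
  have hbne : ((b:ℚ)) ≠ 0 := by
    exact_mod_cast (show (b:ℚ) ≠ 0 by exact_mod_cast (by omega : b ≠ 0))
  have hbpow : ((b:ℚ))^n ≠ 0 := pow_ne_zero _ hbne
  constructor
  · -- normalization
    simp only [balPi]
    rw [hd1, hd2]
    have reind : ∑ i ∈ Finset.Icc (-(m0:ℤ)) (m0:ℤ),
          (signedEulerian n ((i + m0).toNat) : ℚ) / (2^n * n.factorial)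
        = ∑ j ∈ range (n+1), (signedEulerian n j : ℚ) / (2^n * n.factorial) := by
      apply Finset.sum_nbij' (fun i : ℤ => (i + m0).toNat) (fun j : ℕ => (j:ℤ) - m0)
      · intro i hi
        rw [Finset.mem_Icc] at hi
        exact Finset.mem_range.2 (by omega)
      · intro j hj
        rw [Finset.mem_range] at hj
        exact Finset.mem_Icc.2 (by omega)
      · intro i hi
        rw [Finset.mem_Icc] at hi
        omega
      · intro j hj
        rw [Finset.mem_range] at hj
        omega
      · intro i _
        rfl
    rw [reind, ← Finset.sum_div]
    have : ∑ j ∈ range (n+1), (signedEulerian n j : ℚ)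
        = ((∑ j ∈ range (n+1), signedEulerian n j : ℤ) : ℚ) := by push_cast; ring
    rw [this, sum_Abar n]
    push_cast
    field_simp
  · intro k hk1 hk2
    rw [hd2] at hk1
    rw [hd1] at hk2
    have key := main_id b t hh (by omega) m0 n hnm k hk1 hk2
    simp only [balPi, balK]
    rw [hd1, hd2]
    have e1 : ∀ i ∈ Finset.Icc (-(m0:ℤ)) (m0:ℤ),
        (signedEulerian n ((i + m0).toNat) : ℚ) / (2^n * n.factorial)
          * ((balN b n i k : ℚ) / (b:ℚ)^n)
        = ((signedEulerian n ((i + m0).toNat) * (balN b n i k : ℤ) : ℤ) : ℚ)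
            / ((2^n * n.factorial : ℚ) * (b:ℚ)^n) := by
      intro i _
      rw [div_mul_div_comm]
      push_cast
      ring
    rw [Finset.sum_congr rfl e1, ← Finset.sum_div]
    have e2 : ∑ i ∈ Finset.Icc (-(m0:ℤ)) (m0:ℤ),
          ((signedEulerian n ((i + m0).toNat) * (balN b n i k : ℤ) : ℤ) : ℚ)
        = ((∑ i ∈ Finset.Icc (-(m0:ℤ)) (m0:ℤ),
            signedEulerian n ((i + m0).toNat) * (balN b n i k : ℤ) : ℤ) : ℚ) := by
      push_cast; ring
    rw [e2, key]
    push_cast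
    rw [mul_comm ((2:ℚ)^n * (n.factorial:ℚ)) ((b:ℚ)^n)]
    rw [mul_div_mul_left _ _ hbpow]
end

section
/- For integers n ≥ 2, define w^n_j[i] = Σ_{r=0}^{i} (-1)^r · C(n+1, r) · (2i-2r+1)^{n-j} for integers 0 ≤ j ≤ n and i ≥ 0. Then for all integers i, j with 1 ≤ i, j ≤ n, one has the recurrence w^n_j[i] = w^{n-1}_{j-1}[i] - w^{n-1}_{j-1}[i-1]. -/
/-- `w^n_j[i] = Σ_{r=0}^{i} (-1)^r C(n+1,r) (2i-2r+1)^{n-j}`. -/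
def wFoulkes (n j i : ℕ) : ℤ :=
  ∑ r ∈ Finset.range (i + 1),
    (-1 : ℤ) ^ r * (Nat.choose (n + 1) r : ℤ) * (2 * (i : ℤ) - 2 * r + 1) ^ (n - j)

theorem stmt4 (n : ℕ) (hn : 2 ≤ n) (i j : ℕ) (hi1 : 1 ≤ i) (hi2 : i ≤ n)
    (hj1 : 1 ≤ j) (hj2 : j ≤ n) :
    wFoulkes n j i = wFoulkes (n - 1) (j - 1) i - wFoulkes (n - 1) (j - 1) (i - 1) := by
  have he : n - 1 - (j - 1) = n - j := by omega
  have hn' : n - 1 + 1 = n := by omega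
  have hii : i - 1 + 1 = i := by omega
  have hic : ((i - 1 : ℕ) : ℤ) = (i : ℤ) - 1 := by
    push_cast [Nat.cast_sub hi1]; ring
  unfold wFoulkes
  rw [he, hn', hii, hic]
  rw [Finset.sum_range_succ' (fun r => (-1 : ℤ) ^ r * (Nat.choose (n + 1) r : ℤ) *
      (2 * (i : ℤ) - 2 * r + 1) ^ (n - j)) i,
    Finset.sum_range_succ' (fun r => (-1 : ℤ) ^ r * (Nat.choose n r : ℤ) *
      (2 * (i : ℤ) - 2 * r + 1) ^ (n - j)) i]
  simp only [Nat.cast_zero, pow_zero, Nat.choose_zero_right, Nat.cast_one]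
  rw [add_sub_right_comm, add_left_inj, ← Finset.sum_sub_distrib]
  apply Finset.sum_congr rfl
  intro r _
  have hp : (Nat.choose (n + 1) (r + 1) : ℤ) =
      (Nat.choose n r : ℤ) + (Nat.choose n (r + 1) : ℤ) := by
    rw [Nat.choose_succ_succ]; push_cast; ring
  push_cast [hp]
  ring
end

section
/- For every integer n ≥ 1 and every integer j with 0 ≤ j ≤ n, one has w^n_j[n] = (-1)^j, where w^n_j[i] = Σ_{r=0}^{i} (-1)^r · C(n+1, r) · (2i-2r+1)^{n-j}. -/
open Polynomial Finset

lemma aux_fwdDiff_eval (p : ℤ[X]) :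
    fwdDiff (1 : ℤ) (fun x => p.eval x) = fun x => (p.comp (X + C 1) - p).eval x := by
  ext x
  simp [fwdDiff]

lemma aux_degree_comp_sub_lt (p : ℤ[X]) (hp : p ≠ 0) :
    (p.comp (X + C 1) - p).degree < p.degree := by
  have hc0 : p.comp (X + C 1) ≠ 0 := Polynomial.comp_X_add_C_ne_zero_iff.mpr hp
  have hnd : (X + C (1 : ℤ)).natDegree = 1 := Polynomial.natDegree_X_add_C 1
  have hdc : (p.comp (X + C 1)).degree = p.degree := by
    rw [Polynomial.degree_eq_natDegree hc0, Polynomial.degree_eq_natDegree hp,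
      Polynomial.natDegree_comp, hnd, mul_one]
  rw [← hdc]
  exact Polynomial.degree_sub_lt hdc hc0
    (by rw [Polynomial.leadingCoeff_comp (by rw [hnd]; norm_num),
          (Polynomial.monic_X_add_C (1 : ℤ)).leadingCoeff, one_pow, mul_one])

lemma aux_fwdDiff_iter_zero (m : ℕ) : (fwdDiff (1 : ℤ))^[m] (0 : ℤ → ℤ) = 0 := by
  induction m with
  | zero => rfl
  | succ m IH =>
    rw [Function.iterate_succ_apply]
    have : fwdDiff (1 : ℤ) (0 : ℤ → ℤ) = 0 := by ext x; simp [fwdDiff]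
    rw [this, IH]

lemma aux_fwdDiff_iter_eval_eq_zero (m : ℕ) (p : ℤ[X]) (hp : p.degree < (m : ℕ)) :
    (fwdDiff (1 : ℤ))^[m] (fun x => p.eval x) = 0 := by
  induction m generalizing p with
  | zero =>
    have hp0 : p = 0 := by
      rw [← Polynomial.degree_eq_bot]
      exact Nat.WithBot.lt_zero_iff.mp (by exact_mod_cast hp)
    subst hp0
    funext x
    simp
  | succ m IH =>
    by_cases h0 : p = 0
    · subst h0
      convert aux_fwdDiff_iter_zero (m + 1) using 2
      funext x
      simp
    rw [Function.iterate_succ_apply, aux_fwdDiff_eval]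
    set q := p.comp (X + C 1) - p with hq
    by_cases hq0 : q = 0
    · rw [hq0]
      convert aux_fwdDiff_iter_zero m using 2
      funext x
      simp
    apply IH
    rw [← Polynomial.natDegree_lt_iff_degree_lt hq0]
    have h1 : q.natDegree < p.natDegree :=
      Polynomial.natDegree_lt_natDegree hq0 (aux_degree_comp_sub_lt p h0)
    have h2 : p.natDegree < m + 1 := (Polynomial.natDegree_lt_iff_degree_lt h0).mpr hp
    omega

theorem stmt5 (n : ℕ) (hn : 1 ≤ n) (j : ℕ) (hj : j ≤ n) :
    wFoulkes n j n = (-1 : ℤ) ^ j := by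
  set d := n - j with hd
  set p : ℤ[X] := (C 2 * X + C (-1)) ^ d with hp
  have hdeg : p.degree < ((n + 1 : ℕ) : WithBot ℕ) := by
    rw [hp, Polynomial.degree_pow, Polynomial.degree_linear (by norm_num)]
    have : (d : WithBot ℕ) < ((n + 1 : ℕ) : WithBot ℕ) := by
      exact_mod_cast Nat.lt_succ_of_le (Nat.sub_le n j)
    simpa using this
  have hzero := aux_fwdDiff_iter_eval_eq_zero (n + 1) p hdeg
  have hshift := fwdDiff_iter_eq_sum_shift (1 : ℤ) (fun x => p.eval x) (n + 1) 0
  rw [hzero] at hshift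
  -- the full alternating sum over range (n+2) is zero
  have hT : ∑ r ∈ Finset.range (n + 2),
      (-1 : ℤ) ^ r * ((n + 1).choose r : ℤ) * (2 * (n : ℤ) - 2 * r + 1) ^ d = 0 := by
    rw [← Finset.sum_range_reflect]
    have key : ∑ k ∈ Finset.range (n + 2),
        (-1 : ℤ) ^ (n + 2 - 1 - k) * ((n + 1).choose (n + 2 - 1 - k) : ℤ)
          * (2 * (n : ℤ) - 2 * ((n + 2 - 1 - k : ℕ) : ℤ) + 1) ^ d
        = ∑ k ∈ Finset.range (n + 1 + 1),
          ((-1 : ℤ) ^ (n + 1 - k) * ((n + 1).choose k : ℤ)) • ((fun x => p.eval x) ((0 : ℤ) + k • (1 : ℤ))) := by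
      apply Finset.sum_congr rfl
      intro k hk
      have hk' : k ≤ n + 1 := Nat.lt_succ_iff.mp (Finset.mem_range.mp hk)
      have h1 : (n + 1).choose (n + 1 - k) = (n + 1).choose k := Nat.choose_symm hk'
      rw [show n + 2 - 1 - k = n + 1 - k by omega]
      rw [h1]
      have h2 : (2 * (n : ℤ) - 2 * ((n + 1 - k : ℕ) : ℤ) + 1) = 2 * k - 1 := by
        rw [Nat.cast_sub hk']
        push_cast
        ring
      rw [h2]
      have h3 : ((fun x => p.eval x) ((0 : ℤ) + k • (1 : ℤ))) = (2 * (k : ℤ) - 1) ^ d := by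
        simp [hp, sub_eq_add_neg]
      rw [smul_eq_mul, h3]
    exact key.trans hshift.symm
  -- peel off the last term
  have hsucc : ∑ r ∈ Finset.range (n + 2),
      (-1 : ℤ) ^ r * ((n + 1).choose r : ℤ) * (2 * (n : ℤ) - 2 * r + 1) ^ d
      = wFoulkes n j n
        + (-1 : ℤ) ^ (n + 1) * ((n + 1).choose (n + 1) : ℤ)
          * (2 * (n : ℤ) - 2 * (n + 1 : ℕ) + 1) ^ d := by
    rw [Finset.sum_range_succ]
    rfl
  rw [hsucc] at hT
  have hbase : (2 * (n : ℤ) - 2 * ((n + 1 : ℕ) : ℤ) + 1) = -1 := by push_cast; ring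
  rw [hbase, Nat.choose_self] at hT
  simp only [Nat.cast_one] at hT
  obtain ⟨k, rfl⟩ : ∃ k, n = j + k := ⟨n - j, (Nat.add_sub_cancel' hj).symm⟩
  have hdk : d = k := by omega
  rw [hdk] at hT
  have : (-1 : ℤ) ^ (j + k + 1) * 1 * (-1) ^ k = -(-1 : ℤ) ^ j := by
    rw [mul_one, ← pow_add]
    rw [show j + k + 1 + k = j + 2 * k + 1 by ring]
    rw [pow_add, pow_add, pow_mul]
    norm_num
  rw [this] at hT
  linarith
end

section
/- Fix an odd integer b ≥ 3 and an even integer n ≥ 2. For every integer j with 0 ≤ j ≤ n, the vector u_j, defined at each state i with -n/2 ≤ i ≤ n/2 by letting u_j[i] be the coefficient of x^{n-j} in the polynomial (x-n-2i+1)(x-n-2i+3)⋯(x-n-2i+2n-1) (that is, in Π_{m=1}^{n} (x - n - 2i + 2m - 1)), is a right eigenvector of the balanced carries transition matrix K with eigenvalue b^{-j}; that is, for every integer i with -n/2 ≤ i ≤ n/2, Σ_{k=-n/2}^{n/2} K(i,k) · u_j[k] = b^{-j} · u_j[i]. -/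
open Finset Polynomial


/-- The right eigenvector `u_j` of the balanced carries chain, evaluated at state `i`:
the coefficient of `x^{n-j}` in `(x-n-2i+1)(x-n-2i+3)⋯(x-n-2i+2n-1)`. -/
noncomputable def rightEig (n : ℕ) (j : ℕ) (i : ℤ) : ℤ :=
  ((∏ m ∈ Finset.Icc 1 n,
      ((Polynomial.X : Polynomial ℤ) -
        Polynomial.C ((n : ℤ) + 2 * i - 2 * (m : ℤ) + 1))).coeff (n - j))


/-- Falling factorial of an integer. -/
def ffac (z : ℤ) (n : ℕ) : ℤ := ∏ t ∈ Finset.range n, (z - (t : ℤ))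

lemma ffac_succ_top (z : ℤ) (n : ℕ) : ffac z (n + 1) = ffac z n * (z - (n : ℤ)) := by
  rw [ffac, ffac, Finset.prod_range_succ]

lemma ffac_succ_bot (z : ℤ) (n : ℕ) : ffac z (n + 1) = z * ffac (z - 1) n := by
  rw [ffac, ffac, Finset.prod_range_succ']
  rw [mul_comm]
  congr 1
  · simp
  · apply Finset.prod_congr rfl
    intro t _
    push_cast
    ring

lemma ffac_diff (z : ℤ) (n : ℕ) :
    ffac z (n + 1) - ffac (z - 1) (n + 1) = ((n : ℤ) + 1) * ffac (z - 1) n := by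
  rw [ffac_succ_bot, ffac_succ_top]
  ring

lemma ffac_eq_zero {z : ℤ} {n : ℕ} (h0 : 0 ≤ z) (h1 : z < (n : ℤ)) : ffac z n = 0 := by
  apply Finset.prod_eq_zero (i := z.toNat)
  · rw [Finset.mem_range]; omega
  · omega

lemma ediv_eq_of {b w q : ℤ} (hb : 0 < b) (h1 : q * b ≤ w) (h2 : w < (q + 1) * b) :
    w / b = q := by
  have h3 := (Int.le_ediv_iff_mul_le hb).mpr h1
  have h4 := (Int.ediv_lt_iff_lt_mul hb).mpr h2
  omega

lemma ediv_bounds (b w : ℤ) (hb : 0 < b) :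
    (w / b) * b ≤ w ∧ w < (w / b + 1) * b := by
  have h1 := Int.mul_ediv_add_emod w b
  have h2 := Int.emod_nonneg w (ne_of_gt hb)
  have h3 := Int.emod_lt_of_pos w hb
  constructor <;> nlinarith [Int.mul_ediv_add_emod w b]

lemma kdiff (c w : ℤ) (hc : 1 ≤ c) (n : ℕ) :
    ffac (w / (2 * c + 1)) (n + 1) - ffac ((w - 1) / (2 * c + 1)) (n + 1)
      = if (2 * c + 1) ∣ w then ((n : ℤ) + 1) * ffac (w / (2 * c + 1) - 1) n else 0 := by
  have hb : (0 : ℤ) < 2 * c + 1 := by omega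
  by_cases hdvd : (2 * c + 1) ∣ w
  · obtain ⟨q, rfl⟩ := hdvd
    have e1 : (2 * c + 1) * q / (2 * c + 1) = q := Int.mul_ediv_cancel_left _ (by omega)
    have e2 : ((2 * c + 1) * q - 1) / (2 * c + 1) = q - 1 := by
      apply ediv_eq_of hb <;> nlinarith
    rw [e1, e2, if_pos ⟨q, rfl⟩]
    have := ffac_diff q n
    rw [show q - 1 = q - 1 from rfl] at this
    linarith [ffac_diff q n]
  · have e2 : (w - 1) / (2 * c + 1) = w / (2 * c + 1) := by
      obtain ⟨h1, h2⟩ := ediv_bounds (2 * c + 1) w hb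
      have hne : w / (2 * c + 1) * (2 * c + 1) ≠ w := by
        intro h
        exact hdvd ⟨w / (2 * c + 1), by rw [mul_comm]; exact h.symm⟩
      have hlt : w / (2 * c + 1) * (2 * c + 1) < w := lt_of_le_of_ne h1 hne
      apply ediv_eq_of hb <;> linarith
    rw [e2, if_neg hdvd]
    ring

lemma sum_cube_succ (s : Finset ℤ) (n : ℕ) (f : ℤ → ℤ) :
    ∑ X ∈ Fintype.piFinset (fun _ : Fin (n + 1) => s), f (∑ k, X k)
      = ∑ d ∈ s, ∑ Y ∈ Fintype.piFinset (fun _ : Fin n => s), f ((∑ k, Y k) + d) := by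
  rw [← Finset.sum_product']
  apply Finset.sum_nbij' (i := fun X => (X (Fin.last n), Fin.init X))
    (j := fun p => Fin.snoc p.2 p.1)
  · intro X hX
    rw [Finset.mem_product]
    rw [Fintype.mem_piFinset] at hX
    exact ⟨hX _, Fintype.mem_piFinset.mpr fun k => hX _⟩
  · intro p hp
    rw [Finset.mem_product] at hp
    rw [Fintype.mem_piFinset]
    intro a
    refine Fin.lastCases ?_ ?_ a
    · simpa using hp.1
    · intro k
      rw [Fin.snoc_castSucc]
      exact Fintype.mem_piFinset.mp hp.2 k
  · intro X _
    exact Fin.snoc_init_self X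
  · intro p _
    ext
    · simp
    · simp [Fin.init_snoc]
  · intro X _
    rw [Fin.sum_univ_castSucc]
    rfl

lemma sum_cube_neg (c : ℤ) (n : ℕ) (f : ℤ → ℤ) :
    ∑ X ∈ Fintype.piFinset (fun _ : Fin n => Finset.Icc (-c) c), f (∑ k, X k)
      = ∑ X ∈ Fintype.piFinset (fun _ : Fin n => Finset.Icc (-c) c), f (-(∑ k, X k)) := by
  apply Finset.sum_nbij' (i := fun X => -X) (j := fun X => -X)
  · intro X hX
    rw [Fintype.mem_piFinset] at hX ⊢
    intro k
    have := hX k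
    simp only [Finset.mem_Icc, Pi.neg_apply] at *
    omega
  · intro X hX
    rw [Fintype.mem_piFinset] at hX ⊢
    intro k
    have := hX k
    simp only [Finset.mem_Icc, Pi.neg_apply] at *
    omega
  · intro X _; simp
  · intro X _; simp
  · intro X _
    congr 1
    simp

lemma sum_mem_bounds {c : ℤ} {n : ℕ} {X : Fin n → ℤ}
    (hX : X ∈ Fintype.piFinset (fun _ : Fin n => Finset.Icc (-c) c)) :
    -((n : ℤ) * c) ≤ ∑ k, X k ∧ ∑ k, X k ≤ (n : ℤ) * c := by
  rw [Fintype.mem_piFinset] at hX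
  constructor
  · have : ∑ _k : Fin n, (-c) ≤ ∑ k, X k := by
      apply Finset.sum_le_sum
      intro k _
      exact (Finset.mem_Icc.mp (hX k)).1
    simpa using this
  · have : ∑ k, X k ≤ ∑ _k : Fin n, c := by
      apply Finset.sum_le_sum
      intro k _
      exact (Finset.mem_Icc.mp (hX k)).2
    simpa using this

lemma inner_dvd_sum (c : ℤ) (hc : 1 ≤ c) (n : ℕ) (A : ℤ) :
    (∑ d ∈ Finset.Icc (-c) c,
      if (2 * c + 1) ∣ (A + d + c) then ((n : ℤ) + 1) * ffac ((A + d + c) / (2 * c + 1) - 1) n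
      else 0)
    = ((n : ℤ) + 1) * ffac ((A - 1) / (2 * c + 1)) n := by
  have hb : (0 : ℤ) < 2 * c + 1 := by omega
  set w : ℤ := A + c with hw
  set q : ℤ := (w + c) / (2 * c + 1) with hq
  obtain ⟨hq1, hq2⟩ := ediv_bounds (2 * c + 1) (w + c) hb
  rw [← hq] at hq1 hq2
  set d₀ : ℤ := (2 * c + 1) * q - w with hd₀
  have hd₀mem : d₀ ∈ Finset.Icc (-c) c := by
    rw [Finset.mem_Icc]
    constructor <;> nlinarith
  rw [Finset.sum_eq_single_of_mem d₀ hd₀mem]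
  · have hdvd : (2 * c + 1) ∣ (A + d₀ + c) := ⟨q, by rw [hd₀, hw]; ring⟩
    rw [if_pos hdvd]
    have he : (A + d₀ + c) / (2 * c + 1) = q := by
      rw [show A + d₀ + c = (2 * c + 1) * q by rw [hd₀, hw]; ring]
      exact Int.mul_ediv_cancel_left _ (by omega)
    have he2 : (A - 1) / (2 * c + 1) = q - 1 := by
      apply ediv_eq_of hb
      · have hd₀le : d₀ ≤ c := (Finset.mem_Icc.mp hd₀mem).2
        nlinarith
      · have hd₀ge : -c ≤ d₀ := (Finset.mem_Icc.mp hd₀mem).1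
        nlinarith
    rw [he, he2]
  · intro d hd hne
    rw [if_neg]
    intro ⟨t, ht⟩
    have hdd : d - d₀ = (2 * c + 1) * (t - q) := by
      have : A + d₀ + c = (2 * c + 1) * q := by rw [hd₀, hw]; ring
      rw [mul_sub]
      omega
    have hdvd2 : (2 * c + 1) ∣ |d - d₀| := (dvd_abs _ _).mpr ⟨t - q, hdd⟩
    have hpos : 0 < |d - d₀| := abs_pos.mpr (sub_ne_zero.mpr hne)
    have hle := Int.le_of_dvd hpos hdvd2
    rw [Finset.mem_Icc] at hd hd₀mem
    have : |d - d₀| ≤ 2 * c := abs_le.mpr ⟨by omega, by omega⟩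
    omega

lemma key (c : ℤ) (hc : 1 ≤ c) : ∀ (n : ℕ) (M : ℤ),
    ∑ X ∈ Fintype.piFinset (fun _ : Fin n => Finset.Icc (-c) c),
      ffac ((M + (∑ k, X k) + c) / (2 * c + 1)) n = ffac (M - c * ((n : ℤ) - 1)) n := by
  intro n
  induction n with
  | zero => intro M; simp [ffac]
  | succ n IH =>
    have hb : (0 : ℤ) < 2 * c + 1 := by omega
    have hdiffsum : ∀ M : ℤ,
        (∑ X ∈ Fintype.piFinset (fun _ : Fin (n + 1) => Finset.Icc (-c) c),
          ffac ((M + (∑ k, X k) + c) / (2 * c + 1)) (n + 1))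
        - (∑ X ∈ Fintype.piFinset (fun _ : Fin (n + 1) => Finset.Icc (-c) c),
          ffac ((M - 1 + (∑ k, X k) + c) / (2 * c + 1)) (n + 1))
        = ((n : ℤ) + 1) * ffac (M - 1 - c * (n : ℤ)) n := by
      intro M
      rw [← Finset.sum_sub_distrib]
      have step1 :
          ∑ X ∈ Fintype.piFinset (fun _ : Fin (n + 1) => Finset.Icc (-c) c),
            (ffac ((M + (∑ k, X k) + c) / (2 * c + 1)) (n + 1)
              - ffac ((M - 1 + (∑ k, X k) + c) / (2 * c + 1)) (n + 1))
          = ∑ X ∈ Fintype.piFinset (fun _ : Fin (n + 1) => Finset.Icc (-c) c),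
            (if (2 * c + 1) ∣ (M + (∑ k, X k) + c) then
              ((n : ℤ) + 1) * ffac ((M + (∑ k, X k) + c) / (2 * c + 1) - 1) n else 0) := by
        apply Finset.sum_congr rfl
        intro X _
        have h := kdiff c (M + (∑ k, X k) + c) hc n
        rw [show M + (∑ k, X k) + c - 1 = M - 1 + (∑ k, X k) + c by ring] at h
        exact h
      rw [step1]
      have hs := sum_cube_succ (Finset.Icc (-c) c) n
        (fun S => if (2 * c + 1) ∣ (M + S + c) then
          ((n : ℤ) + 1) * ffac ((M + S + c) / (2 * c + 1) - 1) n else 0)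
      rw [hs, Finset.sum_comm]
      calc
        ∑ Y ∈ Fintype.piFinset (fun _ : Fin n => Finset.Icc (-c) c),
            ∑ d ∈ Finset.Icc (-c) c,
              (if (2 * c + 1) ∣ (M + ((∑ k, Y k) + d) + c) then
                ((n : ℤ) + 1) * ffac ((M + ((∑ k, Y k) + d) + c) / (2 * c + 1) - 1) n else 0)
          = ∑ Y ∈ Fintype.piFinset (fun _ : Fin n => Finset.Icc (-c) c),
              ((n : ℤ) + 1) * ffac (((M - 1 - c) + (∑ k, Y k) + c) / (2 * c + 1)) n := by
            apply Finset.sum_congr rfl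
            intro Y _
            have harg : ∀ d : ℤ, M + ((∑ k, Y k) + d) + c = (M + (∑ k, Y k)) + d + c :=
              fun d => by ring
            simp only [harg]
            rw [inner_dvd_sum c hc n (M + (∑ k, Y k))]
            congr 2
            ring
        _ = ((n : ℤ) + 1) * ffac (M - 1 - c * (n : ℤ)) n := by
            rw [← Finset.mul_sum, IH (M - 1 - c)]
            congr 1
            ring
    intro M
    refine Int.inductionOn' M (c * (n : ℤ)) ?_ ?_ ?_
    · -- base point
      push_cast
      rw [show c * (n : ℤ) - c * ((n : ℤ) + 1 - 1) = 0 by ring]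
      rw [ffac_eq_zero (le_refl 0) (by push_cast; omega)]
      apply Finset.sum_eq_zero
      intro X hX
      obtain ⟨hS1, hS2⟩ := sum_mem_bounds hX
      push_cast at hS1 hS2
      apply ffac_eq_zero
      · refine (Int.le_ediv_iff_mul_le hb).mpr ?_
        nlinarith
      · push_cast
        refine (Int.ediv_lt_iff_lt_mul hb).mpr ?_
        nlinarith
    · intro k hk ih
      have hd := hdiffsum (k + 1)
      simp only [add_sub_cancel_right] at hd
      have hr := ffac_diff (k + 1 - c * (n : ℤ)) n
      push_cast at ih ⊢
      rw [show k + 1 - c * ((n : ℤ) + 1 - 1) = k + 1 - c * (n : ℤ) by ring]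
      rw [show k - c * ((n : ℤ) + 1 - 1) = k - c * (n : ℤ) by ring] at ih
      rw [show k + 1 - c * (n : ℤ) - 1 = k - c * (n : ℤ) by ring] at hr
      linarith
    · intro k hk ih
      have hd := hdiffsum k
      have hr := ffac_diff (k - c * (n : ℤ)) n
      push_cast at ih ⊢
      rw [show k - 1 - c * ((n : ℤ) + 1 - 1) = k - c * (n : ℤ) - 1 by ring]
      rw [show k - c * ((n : ℤ) + 1 - 1) = k - c * (n : ℤ) by ring] at ih
      rw [show k - 1 - c * (n : ℤ) = k - c * (n : ℤ) - 1 by ring] at hd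
      linarith

noncomputable def Qpoly (n : ℕ) (a : ℤ) : Polynomial ℤ :=
  ∏ m ∈ Finset.Icc 1 n,
    ((Polynomial.X : Polynomial ℤ) - Polynomial.C ((n : ℤ) + 2 * a - 2 * (m : ℤ) + 1))

lemma coeff_comp_C_mul_X (p : Polynomial ℤ) (b : ℤ) (k : ℕ) :
    (p.comp (Polynomial.C b * Polynomial.X)).coeff k = b ^ k * p.coeff k := by
  induction p using Polynomial.induction_on' with
  | add p q hp hq => rw [add_comp, coeff_add, coeff_add, hp, hq, mul_add]
  | monomial e a =>
    rw [monomial_comp, mul_pow, ← C_pow, ← mul_assoc, mul_comm (C a) (C (b ^ e)), ← C_mul,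
      coeff_C_mul, coeff_X_pow, coeff_monomial]
    by_cases h : k = e
    · subst h; simp
    · simp [h, Ne.symm h]

lemma Qpoly_eval (n : ℕ) (a y : ℤ) :
    (Qpoly n a).eval (2 * y - (n : ℤ) + 1) = 2 ^ n * ffac (y - a) n := by
  rw [Qpoly, eval_prod]
  have h1 : ∀ m ∈ Finset.Icc 1 n,
      Polynomial.eval (2 * y - (n : ℤ) + 1)
          ((Polynomial.X : Polynomial ℤ) - Polynomial.C ((n : ℤ) + 2 * a - 2 * (m : ℤ) + 1))
        = 2 * ((y - a) - ((n : ℤ) - (m : ℤ))) := by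
    intro m _
    simp only [eval_sub, eval_X, eval_C]
    ring
  rw [Finset.prod_congr rfl h1]
  have h2 : ∏ m ∈ Finset.Icc 1 n, (2 * ((y - a) - ((n : ℤ) - (m : ℤ))))
      = ∏ t ∈ Finset.range n, (2 * ((y - a) - (t : ℤ))) := by
    apply Finset.prod_nbij' (i := fun m => n - m) (j := fun t => n - t)
    · intro m hm
      rw [Finset.mem_Icc] at hm
      rw [Finset.mem_range]
      omega
    · intro t ht
      rw [Finset.mem_range] at ht
      rw [Finset.mem_Icc]
      omega
    · intro m hm
      rw [Finset.mem_Icc] at hm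
      omega
    · intro t ht
      rw [Finset.mem_range] at ht
      omega
    · intro m hm
      rw [Finset.mem_Icc] at hm
      congr 1
      have : ((n - m : ℕ) : ℤ) = (n : ℤ) - (m : ℤ) := by omega
      rw [this]
  rw [h2, Finset.prod_mul_distrib, Finset.prod_const, Finset.card_range, ffac]

lemma sub_ediv_kk (c : ℤ) (hc : 1 ≤ c) (y s : ℤ) :
    y - (s + c) / (2 * c + 1) = ((2 * c + 1) * y - s + c) / (2 * c + 1) := by
  have hb : (0 : ℤ) < 2 * c + 1 := by omega
  obtain ⟨h1, h2⟩ := ediv_bounds (2 * c + 1) (s + c) hb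
  symm
  apply ediv_eq_of hb
  · nlinarith
  · nlinarith

lemma polyid (c : ℤ) (hc : 1 ≤ c) (n : ℕ) (i : ℤ) :
    ∑ X ∈ Fintype.piFinset (fun _ : Fin n => Finset.Icc (-c) c),
        Qpoly n ((i + (∑ k, X k) + c) / (2 * c + 1))
      = (Qpoly n i).comp (Polynomial.C (2 * c + 1) * Polynomial.X) := by
  have hb : (0 : ℤ) < 2 * c + 1 := by omega
  apply Polynomial.eq_of_infinite_eval_eq
  apply Set.infinite_of_injective_forall_mem (f := fun y : ℤ => 2 * y - (n : ℤ) + 1)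
  · intro y1 y2 h
    simp only at h
    omega
  · intro y
    simp only [Set.mem_setOf_eq]
    rw [Polynomial.eval_finset_sum]
    have hL : ∀ X ∈ Fintype.piFinset (fun _ : Fin n => Finset.Icc (-c) c),
        Polynomial.eval (2 * y - (n : ℤ) + 1)
            (Qpoly n ((i + (∑ k, X k) + c) / (2 * c + 1)))
          = 2 ^ n * ffac (((2 * c + 1) * y - i + (-(∑ k, X k)) + c) / (2 * c + 1)) n := by
      intro X _
      rw [Qpoly_eval]
      congr 2
      rw [show (i + (∑ k, X k)) + c = ((i + (∑ k, X k)) + c) from rfl]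
      have := sub_ediv_kk c hc y (i + (∑ k, X k))
      rw [this]
      congr 1
      ring
    rw [Finset.sum_congr rfl hL, ← Finset.mul_sum]
    have hneg := sum_cube_neg c n
      (fun S => ffac (((2 * c + 1) * y - i + (-S) + c) / (2 * c + 1)) n)
    simp only at hneg
    rw [hneg]
    have hkey := key c hc n ((2 * c + 1) * y - i)
    have hstep : ∀ X ∈ Fintype.piFinset (fun _ : Fin n => Finset.Icc (-c) c),
        ffac (((2 * c + 1) * y - i + (- -(∑ k, X k)) + c) / (2 * c + 1)) n
          = ffac ((((2 * c + 1) * y - i) + (∑ k, X k) + c) / (2 * c + 1)) n := by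
      intro X _
      congr 2
      ring
    rw [Finset.sum_congr rfl hstep, hkey]
    rw [Polynomial.eval_comp]
    simp only [eval_mul, eval_C, eval_X]
    rw [show (2 * c + 1) * (2 * y - (n : ℤ) + 1)
        = 2 * ((2 * c + 1) * y - c * ((n : ℤ) - 1)) - (n : ℤ) + 1 by ring]
    rw [Qpoly_eval]
    congr 2
    ring

lemma rightEig_eq_coeff (nn jj : ℕ) (a : ℤ) :
    rightEig nn jj a = (Qpoly nn a).coeff (nn - jj) := rfl

theorem stmt8 (b : ℤ) (hodd : Odd b) (hb : 3 ≤ b) (n : ℕ) (hneven : Even n) (hn : 2 ≤ n)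
    (j : ℕ) (hj : j ≤ n)
    (i : ℤ) (hi1 : -(n : ℤ) / 2 ≤ i) (hi2 : i ≤ (n : ℤ) / 2) :
    ∑ k ∈ Finset.Icc (-(n : ℤ) / 2) ((n : ℤ) / 2),
        balK b n i k * (rightEig n j k : ℚ)
      = (1 / (b : ℚ) ^ j) * (rightEig n j i : ℚ) := by
  obtain ⟨c, hbc⟩ := hodd
  subst hbc
  have hc : 1 ≤ c := by omega
  have hb0 : (0 : ℤ) < 2 * c + 1 := by omega
  obtain ⟨m, hm⟩ := hneven
  subst hm
  have hmj : j ≤ m + m := hj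
  rw [show (-(((m + m : ℕ) : ℤ)) / 2) = -(m : ℤ) from by push_cast; omega,
      show ((((m + m : ℕ) : ℤ)) / 2) = (m : ℤ) from by push_cast; omega]
  have hi1' : -(m : ℤ) ≤ i := by push_cast at hi1; omega
  have hi2' : i ≤ (m : ℤ) := by push_cast at hi2; omega
  have h2c : ((2 * c + 1 - 1) / 2 : ℤ) = c := by omega
  have hbne : (2 * c + 1 : ℤ) ≠ 0 := by omega
  have hjj : (m + m) - j + j = m + m := by omega
  -- the polynomial eigenvalue identity, coefficient-extracted
  have Hpoly : ∑ X ∈ Fintype.piFinset (fun _ : Fin (m + m) => Finset.Icc (-c) c),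
      rightEig (m + m) j ((i + (∑ k, X k) + c) / (2 * c + 1))
      = (2 * c + 1) ^ ((m + m) - j) * rightEig (m + m) j i := by
    have hp := congrArg (fun p : Polynomial ℤ => p.coeff ((m + m) - j))
      (polyid c hc (m + m) i)
    simp only [Polynomial.finset_sum_coeff, coeff_comp_C_mul_X] at hp
    simp only [rightEig_eq_coeff]
    exact hp
  -- counting identity: the matrix-vector product equals a sum over digit tuples
  have Hcount : ∑ k' ∈ Finset.Icc (-(m : ℤ)) (m : ℤ),
      (balN (2 * c + 1) (m + m) i k' : ℤ) * rightEig (m + m) j k'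
      = ∑ X ∈ Fintype.piFinset (fun _ : Fin (m + m) => Finset.Icc (-c) c),
        rightEig (m + m) j ((i + (∑ k, X k) + c) / (2 * c + 1)) := by
    simp only [balN, h2c]
    have h1 : ∀ k' ∈ Finset.Icc (-(m : ℤ)) (m : ℤ),
        ((Finset.filter
          (fun X : Fin (m + m) → ℤ =>
            k' * (2 * c + 1) - c ≤ i + ∑ k, X k ∧ i + ∑ k, X k ≤ k' * (2 * c + 1) + c)
          (Fintype.piFinset fun _ : Fin (m + m) => Finset.Icc (-c) c)).card : ℤ)
          * rightEig (m + m) j k'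
        = ∑ X ∈ Fintype.piFinset (fun _ : Fin (m + m) => Finset.Icc (-c) c),
            (if k' * (2 * c + 1) - c ≤ i + ∑ k, X k ∧ i + ∑ k, X k ≤ k' * (2 * c + 1) + c
             then rightEig (m + m) j k' else 0) := by
      intro k' _
      rw [Finset.sum_ite, Finset.sum_const, Finset.sum_const, nsmul_eq_mul, smul_zero,
        add_zero]
    rw [Finset.sum_congr rfl h1, Finset.sum_comm]
    apply Finset.sum_congr rfl
    intro X hX
    obtain ⟨hS1, hS2⟩ := sum_mem_bounds hX
    push_cast at hS1 hS2
    set S : ℤ := ∑ k, X k with hS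
    set k₀ : ℤ := (i + S + c) / (2 * c + 1) with hk₀
    obtain ⟨hq1, hq2⟩ := ediv_bounds (2 * c + 1) (i + S + c) hb0
    rw [← hk₀] at hq1 hq2
    have hk₀mem : k₀ ∈ Finset.Icc (-(m : ℤ)) (m : ℤ) := by
      rw [Finset.mem_Icc]
      constructor
      · refine (Int.le_ediv_iff_mul_le hb0).mpr ?_
        nlinarith
      · have : k₀ < (m : ℤ) + 1 := by
          refine (Int.ediv_lt_iff_lt_mul hb0).mpr ?_
          nlinarith
        exact Int.lt_add_one_iff.mp this
    have hiff : ∀ k' : ℤ,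
        (k' * (2 * c + 1) - c ≤ i + S ∧ i + S ≤ k' * (2 * c + 1) + c) ↔ k' = k₀ := by
      intro k'
      constructor
      · rintro ⟨ha, hb⟩
        symm
        apply ediv_eq_of hb0
        · nlinarith
        · nlinarith
      · rintro rfl
        constructor
        · nlinarith
        · nlinarith
    rw [Finset.sum_eq_single_of_mem k₀ hk₀mem]
    · rw [if_pos ((hiff k₀).mpr rfl)]
    · intro k' _ hne
      rw [if_neg]
      intro hcond
      exact hne ((hiff k').mp hcond)
  have Hint : ∑ k' ∈ Finset.Icc (-(m : ℤ)) (m : ℤ),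
      (balN (2 * c + 1) (m + m) i k' : ℤ) * rightEig (m + m) j k'
      = (2 * c + 1) ^ ((m + m) - j) * rightEig (m + m) j i := Hcount.trans Hpoly
  -- now conclude over ℚ
  have hbQ : ((2 * c + 1 : ℤ) : ℚ) ≠ 0 := by exact_mod_cast hbne
  simp only [balK]
  have hcast := congrArg (fun z : ℤ => (z : ℚ)) Hint
  push_cast at hcast
  calc ∑ k' ∈ Finset.Icc (-(m : ℤ)) (m : ℤ),
        ((balN (2 * c + 1) (m + m) i k' : ℚ) / ((2 * c + 1 : ℤ) : ℚ) ^ (m + m)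
          * (rightEig (m + m) j k' : ℚ))
      = (∑ k' ∈ Finset.Icc (-(m : ℤ)) (m : ℤ),
          ((balN (2 * c + 1) (m + m) i k' : ℚ) * (rightEig (m + m) j k' : ℚ)))
        / ((2 * c + 1 : ℤ) : ℚ) ^ (m + m) := by
        rw [Finset.sum_div]
        apply Finset.sum_congr rfl
        intro k' _
        rw [div_mul_eq_mul_div]
    _ = (((2 * c + 1 : ℤ) : ℚ) ^ ((m + m) - j) * (rightEig (m + m) j i : ℚ))
        / ((2 * c + 1 : ℤ) : ℚ) ^ (m + m) := by
        rw [show ∑ k' ∈ Finset.Icc (-(m : ℤ)) (m : ℤ),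
            ((balN (2 * c + 1) (m + m) i k' : ℚ) * (rightEig (m + m) j k' : ℚ))
            = (((2 * c + 1 : ℤ) : ℚ) ^ ((m + m) - j) * (rightEig (m + m) j i : ℚ)) from by
          push_cast
          exact hcast]
    _ = (1 / ((2 * c + 1 : ℤ) : ℚ) ^ j) * (rightEig (m + m) j i : ℚ) := by
        have hpow : ((2 * c + 1 : ℤ) : ℚ) ^ (m + m)
            = ((2 * c + 1 : ℤ) : ℚ) ^ ((m + m) - j) * ((2 * c + 1 : ℤ) : ℚ) ^ j := by
          rw [← pow_add]
          congr 1
          exact hjj.symm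
        rw [hpow]
        have h1 : ((2 * c + 1 : ℤ) : ℚ) ^ ((m + m) - j) ≠ 0 := pow_ne_zero _ hbQ
        have h2 : ((2 * c + 1 : ℤ) : ℚ) ^ j ≠ 0 := pow_ne_zero _ hbQ
        field_simp
end

section
/- Let n ≥ 1 be an integer and let i, j be integers with |j - i| ≤ n. Then Σ_{r=0}^{n+1} (-1)^r · C(n+1, r) · C(n + j - i - r, n) = 1 if i = j, and equals 0 otherwise, where C(m, n) denotes the binomial coefficient, taken to be 0 whenever m < n. -/
lemma intChoose_eq_zero {m k : ℤ} (hk : 0 ≤ k) (h : m < k) : intChoose m k = 0 := by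
  unfold intChoose
  split_ifs with h'
  · have : m.toNat < k.toNat := by omega
    simp [Nat.choose_eq_zero_of_lt this]
  · rfl

lemma intChoose_natCast (a b : ℕ) : intChoose (a : ℤ) (b : ℤ) = (a.choose b : ℤ) := by
  simp [intChoose]

open Finset fwdDiff in
lemma key_sum (n d : ℕ) (hd : 1 ≤ d) :
    ∑ r ∈ Finset.range (n + 2),
      (-1 : ℤ) ^ r * (Nat.choose (n + 1) r : ℤ) * ((n + d - r).choose n : ℤ) = 0 := by
  have h0 : (fwdDiff (1:ℕ))^[n + 1] (fun x : ℕ => (x.choose n : ℤ)) = fun _ => 0 := by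
    have hn := fwdDiff_iter_choose 0 n
    simp only [add_zero] at hn
    rw [Function.iterate_succ_apply', hn]
    funext x
    simp [fwdDiff]
  have h1 := fwdDiff_iter_eq_sum_shift (1 : ℕ) (fun x : ℕ => (x.choose n : ℤ)) (n + 1) (d - 1)
  rw [h0] at h1
  have h2 : (0 : ℤ) = ∑ k ∈ range (n + 2),
      ((-1 : ℤ) ^ (n + 1 - k) * ((n + 1).choose k : ℤ)) * ((d - 1 + k).choose n : ℤ) := by
    simpa [zsmul_eq_mul] using h1
  rw [h2, ← Finset.sum_range_reflect]
  refine Finset.sum_congr rfl fun r hr => ?_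
  simp only [Finset.mem_range] at hr
  have h3 : n + 1 + 1 - 1 - r = n + 1 - r := by omega
  have h4 : n + 1 - (n + 1 - r) = r := by omega
  have h5 : d - 1 + (n + 1 - r) = n + d - r := by omega
  have h6 : (n + 1).choose (n + 1 - r) = (n + 1).choose r :=
    Nat.choose_symm (by omega)
  have h7 : n + d - (n + 1 - r) = d - 1 + r := by omega
  rw [h3, h6, h7]

theorem stmt10 (n : ℕ) (hn : 1 ≤ n) (i j : ℤ) (h : |j - i| ≤ (n : ℤ)) :
    ∑ r ∈ Finset.range (n + 2),
        (-1 : ℤ) ^ r * (Nat.choose (n + 1) r : ℤ) * intChoose ((n : ℤ) + j - i - r) (n : ℤ)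
      = if i = j then 1 else 0 := by
  rcases lt_trichotomy j i with hji | rfl | hij
  · rw [if_neg (by omega)]
    refine Finset.sum_eq_zero fun r hr => ?_
    have hr0 : (0 : ℤ) ≤ (r : ℤ) := Int.natCast_nonneg r
    rw [intChoose_eq_zero (Int.natCast_nonneg n) (by omega), mul_zero]
  · rw [if_pos rfl]
    rw [Finset.sum_eq_single 0]
    · have : (n : ℤ) + j - j - (0 : ℕ) = ((n : ℕ) : ℤ) := by push_cast; ring
      rw [this, intChoose_natCast, Nat.choose_self]
      simp
    · intro r hr hr0
      have hr1 : (1 : ℤ) ≤ (r : ℤ) := by exact_mod_cast Nat.one_le_iff_ne_zero.mpr hr0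
      rw [intChoose_eq_zero (Int.natCast_nonneg n) (by omega), mul_zero]
    · intro hc
      exact absurd (Finset.mem_range.mpr (by omega)) hc
  · rw [if_neg (by omega)]
    have habs : j - i ≤ (n : ℤ) := le_of_abs_le h
    set d := (j - i).toNat with hdd
    have hd : j - i = (d : ℤ) := (Int.toNat_of_nonneg (by omega)).symm
    have hd1 : 1 ≤ d := by omega
    have hdn : (d : ℤ) ≤ (n : ℤ) := by omega
    rw [← key_sum n d hd1]
    refine Finset.sum_congr rfl fun r hr => ?_
    simp only [Finset.mem_range] at hr
    have hcast : (n : ℤ) + j - i - r = ((n + d - r : ℕ) : ℤ) := by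
      rw [Nat.cast_sub (by omega)]
      push_cast
      omega
    rw [hcast, intChoose_natCast]
end

section
/- Let (X_1, X_2, …, X_n) be {0,1}-valued random variables on a probability space that form a stationary one-dependent process: the joint distribution of (X_{k+1}, …, X_{k+m}) does not depend on k, and for every k the family (X_1,…,X_k) is independent of the family (X_{k+2}, X_{k+3}, …). Set a_1 = 1, a_i = P(X_1 = X_2 = ⋯ = X_{i-1} = 1) for i ≥ 2, a_0 = 1, and a_i = 0 for i < 0. Then for any binary string (t_1, …, t_{n-1}) whose zeros are exactly at the positions S = {s_1 < s_2 < ⋯ < s_k} ⊆ {1,…,n-1}, with the conventions s_0 = 0 and s_{k+1} = n, one has P(X_1 = t_1, …, X_{n-1} = t_{n-1}) = det( (a_{s_{j+1} - s_i})_{i,j=0}^{k} ), a determinant of a (k+1)×(k+1) matrix. -/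
open MeasureTheory

section BDFhelpers

set_option linter.unusedSectionVars false
set_option maxHeartbeats 1000000

variable {Ω : Type*} [MeasurableSpace Ω] (P : Measure Ω) [IsProbabilityMeasure P]
  (X : ℕ → Ω → Bool)

private lemma BDF_splitP (hXmeas : ∀ i, Measurable (X i)) (S : Set Ω) (j : ℕ) :
    P S = P (S ∩ {ω | X j ω = true}) + P (S ∩ {ω | X j ω = false}) := by
  have hm : MeasurableSet {ω | X j ω = true} := (hXmeas j) (measurableSet_singleton _)
  have h2 : S \ {ω | X j ω = true} = S ∩ {ω | X j ω = false} := by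
    ext ω; simp [Set.mem_diff]
  rw [← h2, measure_inter_add_diff S hm]

private lemma BDF_onedep (n : ℕ) (hXmeas : ∀ i, Measurable (X i))
    (honedep : ∀ (k : ℕ) (u v : ℕ → Bool),
      P ({ω | ∀ i, 1 ≤ i → i ≤ k → X i ω = u i} ∩
          {ω | ∀ i, k + 2 ≤ i → i ≤ n → X i ω = v i})
        = P {ω | ∀ i, 1 ≤ i → i ≤ k → X i ω = u i} *
            P {ω | ∀ i, k + 2 ≤ i → i ≤ n → X i ω = v i}) :
    ∀ (d N : ℕ), N + d = n → ∀ (k : ℕ), k + 1 ≤ N → ∀ (u v : ℕ → Bool),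
      P ({ω | ∀ i, 1 ≤ i → i ≤ k → X i ω = u i} ∩
          {ω | ∀ i, k + 2 ≤ i → i ≤ N → X i ω = v i})
        = P {ω | ∀ i, 1 ≤ i → i ≤ k → X i ω = u i} *
            P {ω | ∀ i, k + 2 ≤ i → i ≤ N → X i ω = v i} := by
  intro d
  induction d with
  | zero =>
    intro N hN k hk u v
    have hNn : N = n := by omega
    subst hNn; exact honedep k u v
  | succ d ih =>
    intro N hN k hk u v
    have hN' : (N + 1) + d = n := by omega
    have key : ∀ b : Bool,
        {ω | ∀ i, k + 2 ≤ i → i ≤ N → X i ω = v i} ∩ {ω | X (N+1) ω = b}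
          = {ω | ∀ i, k + 2 ≤ i → i ≤ N + 1 → X i ω = Function.update v (N+1) b i} := by
      intro b; ext ω
      constructor
      · rintro ⟨h1, h2⟩ i hi1 hi2
        rcases Nat.lt_or_ge i (N+1) with h | h
        · rw [Function.update_of_ne (by omega)]; exact h1 i hi1 (by omega)
        · have : i = N + 1 := by omega
          subst this; rw [Function.update_self]; exact h2
      · intro h
        refine ⟨fun i hi1 hi2 => ?_, ?_⟩
        · have := h i hi1 (by omega)
          rwa [Function.update_of_ne (by omega)] at this
        · have := h (N+1) (by omega) le_rfl
          rwa [Function.update_self] at this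
    have keyA : ∀ b : Bool,
        ({ω | ∀ i, 1 ≤ i → i ≤ k → X i ω = u i} ∩
          {ω | ∀ i, k + 2 ≤ i → i ≤ N → X i ω = v i}) ∩ {ω | X (N+1) ω = b}
        = {ω | ∀ i, 1 ≤ i → i ≤ k → X i ω = u i} ∩
          {ω | ∀ i, k + 2 ≤ i → i ≤ N + 1 → X i ω = Function.update v (N+1) b i} := by
      intro b; rw [Set.inter_assoc, key b]
    rw [BDF_splitP P X hXmeas _ (N+1), keyA true, keyA false,
        ih (N+1) hN' k (by omega), ih (N+1) hN' k (by omega),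
        BDF_splitP P X hXmeas {ω | ∀ i, k + 2 ≤ i → i ≤ N → X i ω = v i} (N+1),
        key true, key false, mul_add]

private lemma BDF_stat (n : ℕ)
    (hstat : ∀ (k m : ℕ) (u : Fin m → Bool), k + m ≤ n →
      P {ω | ∀ i : Fin m, X (k + 1 + (i : ℕ)) ω = u i}
        = P {ω | ∀ i : Fin m, X (1 + (i : ℕ)) ω = u i})
    (c m : ℕ) (hcm : c + m ≤ n) (u : ℕ → Bool) :
    P {ω | ∀ i, c + 1 ≤ i → i ≤ c + m → X i ω = u i}
      = P {ω | ∀ i, 1 ≤ i → i ≤ m → X i ω = u (i + c)} := by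
  have h1 : {ω | ∀ i : Fin m, X (c + 1 + (i : ℕ)) ω = u (c + 1 + (i:ℕ))}
      = {ω | ∀ i, c + 1 ≤ i → i ≤ c + m → X i ω = u i} := by
    ext ω; constructor
    · intro h i hi1 hi2
      have := h ⟨i - c - 1, by omega⟩
      simpa [show c + 1 + (i - c - 1) = i by omega] using this
    · intro h i
      exact h (c + 1 + (i:ℕ)) (by omega) (by omega)
  have h2 : {ω | ∀ i : Fin m, X (1 + (i : ℕ)) ω = u (c + 1 + (i:ℕ))}
      = {ω | ∀ i, 1 ≤ i → i ≤ m → X i ω = u (i + c)} := by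
    ext ω; constructor
    · intro h i hi1 hi2
      have := h ⟨i - 1, by omega⟩
      simpa [show 1 + (i - 1) = i by omega, show c + 1 + (i-1) = i + c by omega] using this
    · intro h i
      have := h (1 + (i:ℕ)) (by omega) (by omega)
      simpa [show 1 + (i:ℕ) + c = c + 1 + (i:ℕ) by omega] using this
  rw [← h1, ← h2, hstat c m (fun i => u (c + 1 + (i:ℕ))) hcm]

private lemma BDF_detRec (a : ℤ → ℝ) (ha0 : a 0 = 1) (haneg : ∀ i : ℤ, i < 0 → a i = 0)
    (k : ℕ) (s : ℕ → ℕ) (hs0 : s 0 = 0)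
    (hsmono : ∀ i j : ℕ, i < j → j ≤ k + 2 → s i < s j) :
    Matrix.det (Matrix.of fun i j : Fin (k+1+1) =>
        a ((s ((j:ℕ)+1) : ℤ) - (s (i:ℕ) : ℤ)))
      = a (s 1) * Matrix.det (Matrix.of fun i j : Fin (k+1) =>
          a (((s ((j:ℕ)+1+1) - s 1 : ℕ) : ℤ) - ((s ((i:ℕ)+1) - s 1 : ℕ) : ℤ)))
        - Matrix.det (Matrix.of fun i j : Fin (k+1) =>
          a (((if (j:ℕ)+1 = 0 then 0 else s ((j:ℕ)+1+1) : ℕ) : ℤ)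
              - ((if (i:ℕ) = 0 then 0 else s ((i:ℕ)+1) : ℕ) : ℤ))) := by
  set M := (Matrix.of fun i j : Fin (k+1+1) =>
        a ((s ((j:ℕ)+1) : ℤ) - (s (i:ℕ) : ℤ))) with hM
  rw [Matrix.det_succ_column_zero, Fin.sum_univ_succ, Fin.sum_univ_succ]
  have htail : ∀ i : Fin k,
      (-1 : ℝ) ^ ((i.succ.succ : Fin (k+1+1)) : ℕ) * M i.succ.succ 0 *
        (M.submatrix (i.succ.succ).succAbove Fin.succ).det = 0 := by
    intro i
    have h1 : M i.succ.succ 0 = a ((s 1 : ℤ) - s ((i:ℕ)+2)) := by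
      simp [hM, Fin.val_succ]
    have h2 : s 1 < s ((i:ℕ)+2) := hsmono 1 ((i:ℕ)+2) (by omega) (by omega)
    have hneg : (s 1 : ℤ) - (s ((i:ℕ)+2) : ℤ) < 0 := by omega
    rw [h1, haneg _ hneg]
    ring
  rw [Finset.sum_congr rfl (fun i _ => htail i), Finset.sum_const, smul_zero, add_zero]
  have hM00 : M 0 0 = a (s 1) := by simp [hM, hs0]
  have hM10 : M 1 0 = 1 := by
    have : M 1 0 = a ((s 1 : ℤ) - s 1) := by simp [hM]
    rw [this, sub_self, ha0]
  have hsub0 : M.submatrix (0 : Fin (k+1+1)).succAbove Fin.succ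
      = Matrix.of (fun i j : Fin (k+1) =>
          a (((s ((j:ℕ)+1+1) - s 1 : ℕ) : ℤ) - ((s ((i:ℕ)+1) - s 1 : ℕ) : ℤ))) := by
    ext i j
    have h1 : s 1 ≤ s ((i:ℕ)+1) := by
      rcases Nat.lt_or_ge 1 ((i:ℕ)+1) with h | h
      · exact le_of_lt (hsmono 1 ((i:ℕ)+1) h (by omega))
      · have : (i:ℕ) = 0 := by omega
        rw [this]
    have h2 : s 1 ≤ s ((j:ℕ)+1+1) := le_of_lt (hsmono 1 ((j:ℕ)+1+1) (by omega) (by omega))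
    simp only [Fin.succAbove_zero, Matrix.submatrix_apply, hM, Matrix.of_apply, Fin.val_succ]
    congr 1
    omega
  have hval : ∀ i : Fin (k+1), (((1 : Fin (k+1+1)).succAbove i) : ℕ)
      = if (i:ℕ) = 0 then 0 else (i:ℕ)+1 := by
    intro i
    rcases Nat.eq_zero_or_pos (i:ℕ) with h | h
    · rw [if_pos h]
      have : Fin.castSucc i < 1 := by
        rw [Fin.lt_def]; simp [h]
      rw [Fin.succAbove_of_castSucc_lt _ _ this]
      simp [h]
    · rw [if_neg (by omega)]
      have : (1 : Fin (k+1+1)) ≤ Fin.castSucc i := by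
        rw [Fin.le_def]; simp only [Fin.coe_castSucc, Fin.val_one]; omega
      rw [Fin.succAbove_of_le_castSucc _ _ this]
      simp
  have hsub1 : M.submatrix (1 : Fin (k+1+1)).succAbove Fin.succ
      = Matrix.of (fun i j : Fin (k+1) =>
          a (((if (j:ℕ)+1 = 0 then 0 else s ((j:ℕ)+1+1) : ℕ) : ℤ)
              - ((if (i:ℕ) = 0 then 0 else s ((i:ℕ)+1) : ℕ) : ℤ))) := by
    ext i j
    simp only [Matrix.submatrix_apply, hM, Matrix.of_apply, Fin.val_succ, hval i]
    rw [if_neg (Nat.succ_ne_zero (j:ℕ))]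
    rcases Nat.eq_zero_or_pos (i:ℕ) with h | h
    · rw [if_pos h, if_pos h, hs0]
    · have h' : (i:ℕ) ≠ 0 := by omega
      rw [if_neg h', if_neg h']
  rw [show (Fin.succ (0 : Fin (k+1))) = (1 : Fin (k+1+1)) from rfl]
  rw [hsub0, hsub1, hM00, hM10]
  simp [Fin.val_succ]
  ring

private lemma BDF_master (n : ℕ) (hXmeas : ∀ i, Measurable (X i))
    (hstat : ∀ (k m : ℕ) (u : Fin m → Bool), k + m ≤ n →
      P {ω | ∀ i : Fin m, X (k + 1 + (i : ℕ)) ω = u i}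
        = P {ω | ∀ i : Fin m, X (1 + (i : ℕ)) ω = u i})
    (honedep : ∀ (k : ℕ) (u v : ℕ → Bool),
      P ({ω | ∀ i, 1 ≤ i → i ≤ k → X i ω = u i} ∩
          {ω | ∀ i, k + 2 ≤ i → i ≤ n → X i ω = v i})
        = P {ω | ∀ i, 1 ≤ i → i ≤ k → X i ω = u i} *
            P {ω | ∀ i, k + 2 ≤ i → i ≤ n → X i ω = v i})
    (a : ℤ → ℝ) (ha0 : a 0 = 1) (ha1 : a 1 = 1) (haneg : ∀ i : ℤ, i < 0 → a i = 0)
    (ha : ∀ i : ℕ, 2 ≤ i → i ≤ n + 1 →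
      a i = (P {ω | ∀ m, 1 ≤ m → m ≤ i - 1 → X m ω = true}).toReal) :
    ∀ (k : ℕ) (s : ℕ → ℕ) (τ : ℕ → Bool),
      s 0 = 0 → (∀ i j : ℕ, i < j → j ≤ k + 1 → s i < s j) → s (k+1) ≤ n → 1 ≤ s (k+1) →
      (∀ i, 1 ≤ i → i ≤ s (k+1) - 1 → (τ i = false ↔ ∃ j, 1 ≤ j ∧ j ≤ k ∧ s j = i)) →
      (P {ω | ∀ i, 1 ≤ i → i ≤ s (k+1) - 1 → X i ω = τ i}).toReal
        = Matrix.det (Matrix.of fun i j : Fin (k+1) =>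
            a ((s ((j:ℕ)+1) : ℤ) - (s (i:ℕ) : ℤ))) := by
  intro k
  induction k with
  | zero =>
    intro s τ hs0 hsmono hsn hs1 hz
    have hsn' : s 1 ≤ n := hsn
    have hs1' : 1 ≤ s 1 := hs1
    show (P {ω | ∀ i, 1 ≤ i → i ≤ s 1 - 1 → X i ω = τ i}).toReal
      = Matrix.det (Matrix.of fun i j : Fin 1 => a ((s ((j:ℕ)+1) : ℤ) - (s (i:ℕ) : ℤ)))
    have hdet : Matrix.det (Matrix.of fun i j : Fin 1 =>
        a ((s ((j:ℕ)+1) : ℤ) - (s (i:ℕ) : ℤ))) = a (s 1) := by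
      rw [Matrix.det_fin_one]
      simp [hs0]
    rw [hdet]
    have htrue : ∀ i, 1 ≤ i → i ≤ s 1 - 1 → τ i = true := by
      intro i h1 h2
      cases h : τ i with
      | false =>
        obtain ⟨j, hj1, hj2, _⟩ := (hz i h1 h2).mp h
        omega
      | true => rfl
    have hset : {ω | ∀ i, 1 ≤ i → i ≤ s 1 - 1 → X i ω = τ i}
        = {ω | ∀ m, 1 ≤ m → m ≤ s 1 - 1 → X m ω = true} := by
      ext ω; constructor
      · intro h i h1 h2; rw [h i h1 h2, htrue i h1 h2]
      · intro h i h1 h2; rw [h i h1 h2, htrue i h1 h2]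
    rw [hset]
    rcases Nat.lt_or_ge (s 1) 2 with h | h
    · have hs11 : s 1 = 1 := by omega
      have huniv : {ω : Ω | ∀ m, 1 ≤ m → m ≤ s 1 - 1 → X m ω = true} = Set.univ := by
        ext ω; simp only [Set.mem_setOf_eq, Set.mem_univ, iff_true]
        intro m h1 h2; omega
      rw [huniv, measure_univ, ENNReal.toReal_one, hs11]
      simp [ha1]
    · rw [ha (s 1) h (by omega)]
  | succ k ih =>
    intro s τ hs0 hsmono hsn hs1 hz
    have hs1pos : 1 ≤ s 1 := by
      have := hsmono 0 1 (by omega) (by omega); omega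
    have hs1N : s 1 < s (k+1+1) := hsmono 1 (k+1+1) (by omega) (by omega)
    have hτs1 : τ (s 1) = false :=
      (hz (s 1) hs1pos (by omega)).mpr ⟨1, le_rfl, by omega, rfl⟩
    have htr : ∀ i, 1 ≤ i → i < s 1 → τ i = true := by
      intro i h1 h2
      cases h : τ i with
      | false =>
        obtain ⟨j, hj1, hj2, hj3⟩ := (hz i h1 (by omega)).mp h
        have hsj : s 1 ≤ s j := by
          rcases Nat.lt_or_ge 1 j with h' | h'
          · exact le_of_lt (hsmono 1 j h' (by omega))
          · have : j = 1 := by omega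
            rw [this]
        omega
      | true => rfl
    -- split off the first zero
    have e1 : {ω | ∀ i, 1 ≤ i ∧ i ≤ s (k+1+1) - 1 ∧ i ≠ s 1 → X i ω = τ i}
          ∩ {ω | X (s 1) ω = true}
        = {ω | ∀ i, 1 ≤ i → i ≤ s (k+1+1) - 1 → X i ω = Function.update τ (s 1) true i} := by
      ext ω
      simp only [Set.mem_inter_iff, Set.mem_setOf_eq]
      constructor
      · rintro ⟨h1, h2⟩ i hi1 hi2
        rcases eq_or_ne i (s 1) with h | h
        · subst h; rw [Function.update_self]; exact h2
        · rw [Function.update_of_ne h]; exact h1 i ⟨hi1, hi2, h⟩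
      · intro h
        refine ⟨fun i hi => ?_, ?_⟩
        · have := h i hi.1 hi.2.1
          rwa [Function.update_of_ne hi.2.2] at this
        · have := h (s 1) hs1pos (by omega)
          rwa [Function.update_self] at this
    have e2 : {ω | ∀ i, 1 ≤ i ∧ i ≤ s (k+1+1) - 1 ∧ i ≠ s 1 → X i ω = τ i}
          ∩ {ω | X (s 1) ω = false}
        = {ω | ∀ i, 1 ≤ i → i ≤ s (k+1+1) - 1 → X i ω = τ i} := by
      ext ω
      simp only [Set.mem_inter_iff, Set.mem_setOf_eq]
      constructor
      · rintro ⟨h1, h2⟩ i hi1 hi2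
        rcases eq_or_ne i (s 1) with h | h
        · subst h; rw [hτs1]; exact h2
        · exact h1 i ⟨hi1, hi2, h⟩
      · intro h
        refine ⟨fun i hi => h i hi.1 hi.2.1, ?_⟩
        rw [h (s 1) hs1pos (by omega), hτs1]
    have hsplit : P {ω | ∀ i, 1 ≤ i ∧ i ≤ s (k+1+1) - 1 ∧ i ≠ s 1 → X i ω = τ i}
        = P {ω | ∀ i, 1 ≤ i → i ≤ s (k+1+1) - 1 → X i ω = Function.update τ (s 1) true i}
          + P {ω | ∀ i, 1 ≤ i → i ≤ s (k+1+1) - 1 → X i ω = τ i} := by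
      rw [BDF_splitP P X hXmeas _ (s 1), e1, e2]
    -- factor the free event into a product
    have hfactor : {ω | ∀ i, 1 ≤ i ∧ i ≤ s (k+1+1) - 1 ∧ i ≠ s 1 → X i ω = τ i}
        = {ω | ∀ i, 1 ≤ i → i ≤ s 1 - 1 → X i ω = true}
          ∩ {ω | ∀ i, (s 1 - 1) + 2 ≤ i → i ≤ s (k+1+1) - 1 → X i ω = τ i} := by
      ext ω
      simp only [Set.mem_inter_iff, Set.mem_setOf_eq]
      constructor
      · intro h
        constructor
        · intro i hi1 hi2
          rw [h i ⟨hi1, by omega, by omega⟩]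
          exact htr i hi1 (by omega)
        · intro i hi1 hi2
          exact h i ⟨by omega, hi2, by omega⟩
      · rintro ⟨h1, h2⟩ i ⟨hi1, hi2, hi3⟩
        rcases Nat.lt_or_ge i (s 1) with h | h
        · rw [h1 i hi1 (by omega)]
          exact (htr i hi1 h).symm
        · exact h2 i (by omega) hi2
    have hprod : P {ω | ∀ i, 1 ≤ i ∧ i ≤ s (k+1+1) - 1 ∧ i ≠ s 1 → X i ω = τ i}
        = P {ω | ∀ i, 1 ≤ i → i ≤ s 1 - 1 → X i ω = true}
          * P {ω | ∀ i, (s 1 - 1) + 2 ≤ i → i ≤ s (k+1+1) - 1 → X i ω = τ i} := by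
      rw [hfactor]
      exact BDF_onedep P X n hXmeas honedep (n - (s (k+1+1) - 1)) (s (k+1+1) - 1)
        (by omega) (s 1 - 1) (by omega) (fun _ => true) τ
    -- block probability
    have hblock : (P {ω | ∀ i, 1 ≤ i → i ≤ s 1 - 1 → X i ω = true}).toReal = a (s 1) := by
      rcases Nat.lt_or_ge (s 1) 2 with h | h
      · have huniv : {ω : Ω | ∀ i, 1 ≤ i → i ≤ s 1 - 1 → X i ω = true} = Set.univ := by
          ext ω; simp only [Set.mem_setOf_eq, Set.mem_univ, iff_true]
          intro i h1 h2; omega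
        rw [huniv, measure_univ, ENNReal.toReal_one,
          show s 1 = 1 by omega]
        simp [ha1]
      · rw [ha (s 1) h (by omega)]
    -- shift the rest
    have hrest : P {ω | ∀ i, (s 1 - 1) + 2 ≤ i → i ≤ s (k+1+1) - 1 → X i ω = τ i}
        = P {ω | ∀ i, 1 ≤ i → i ≤ s (k+1+1) - s 1 - 1 → X i ω = τ (i + s 1)} := by
      have hb1 : {ω : Ω | ∀ i, (s 1 - 1) + 2 ≤ i → i ≤ s (k+1+1) - 1 → X i ω = τ i}
          = {ω : Ω | ∀ i, s 1 + 1 ≤ i → i ≤ s 1 + (s (k+1+1) - 1 - s 1) → X i ω = τ i} := by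
        ext ω
        simp only [Set.mem_setOf_eq]
        constructor
        · intro h i hi1 hi2; exact h i (by omega) (by omega)
        · intro h i hi1 hi2; exact h i (by omega) (by omega)
      have hb2 : {ω : Ω | ∀ i, 1 ≤ i → i ≤ s (k+1+1) - 1 - s 1 → X i ω = τ (i + s 1)}
          = {ω : Ω | ∀ i, 1 ≤ i → i ≤ s (k+1+1) - s 1 - 1 → X i ω = τ (i + s 1)} := by
        rw [show s (k+1+1) - 1 - s 1 = s (k+1+1) - s 1 - 1 by omega]
      rw [hb1, BDF_stat P X n hstat (s 1) (s (k+1+1) - 1 - s 1) (by omega) τ, hb2]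
    -- induction hypothesis for the shifted string
    have hshift : (P {ω | ∀ i, 1 ≤ i → i ≤ s (k+1+1) - s 1 - 1 → X i ω = τ (i + s 1)}).toReal
        = Matrix.det (Matrix.of fun i j : Fin (k+1) =>
            a (((s ((j:ℕ)+1+1) - s 1 : ℕ) : ℤ) - ((s ((i:ℕ)+1) - s 1 : ℕ) : ℤ))) := by
      have hmono' : ∀ i j : ℕ, i < j → j ≤ k + 1 → s (i+1) - s 1 < s (j+1) - s 1 := by
        intro i j hij hjk
        have h1 : s (i+1) < s (j+1) := hsmono (i+1) (j+1) (by omega) (by omega)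
        have h2 : s 1 ≤ s (i+1) := by
          rcases Nat.lt_or_ge 1 (i+1) with h | h
          · exact le_of_lt (hsmono 1 (i+1) h (by omega))
          · have : i = 0 := by omega
            subst this; exact le_rfl
        omega
      have hz' : ∀ i, 1 ≤ i → i ≤ (s (k+1+1) - s 1) - 1 →
          (τ (i + s 1) = false ↔ ∃ j, 1 ≤ j ∧ j ≤ k ∧ s (j+1) - s 1 = i) := by
        intro i hi1 hi2
        have hzz := hz (i + s 1) (by omega) (by omega)
        constructor
        · intro h
          obtain ⟨j, hj1, hj2, hj3⟩ := hzz.mp h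
          have hj1' : 2 ≤ j := by
            rcases Nat.eq_or_lt_of_le hj1 with h' | h'
            · exfalso; rw [← h'] at hj3; omega
            · omega
          refine ⟨j - 1, by omega, by omega, ?_⟩
          rw [show j - 1 + 1 = j by omega]
          omega
        · rintro ⟨j, hj1, hj2, hj3⟩
          refine hzz.mpr ⟨j + 1, by omega, by omega, ?_⟩
          have : s 1 ≤ s (j+1) := le_of_lt (hsmono 1 (j+1) (by omega) (by omega))
          omega
      exact ih (fun j => s (j+1) - s 1) (fun i => τ (i + s 1)) (by simp)
        hmono' (by show s (k+1+1) - s 1 ≤ n; omega)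
        (by show 1 ≤ s (k+1+1) - s 1; omega) hz'
    -- induction hypothesis for the string with the first zero removed
    have hone : (P {ω | ∀ i, 1 ≤ i → i ≤ s (k+1+1) - 1 →
            X i ω = Function.update τ (s 1) true i}).toReal
        = Matrix.det (Matrix.of fun i j : Fin (k+1) =>
            a (((if (j:ℕ)+1 = 0 then 0 else s ((j:ℕ)+1+1) : ℕ) : ℤ)
                - ((if (i:ℕ) = 0 then 0 else s ((i:ℕ)+1) : ℕ) : ℤ))) := by
      have hmono'' : ∀ i j : ℕ, i < j → j ≤ k + 1 →
          (if i = 0 then 0 else s (i+1)) < (if j = 0 then 0 else s (j+1)) := by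
        intro i j hij hjk
        rw [if_neg (by omega : j ≠ 0)]
        rcases Nat.eq_zero_or_pos i with h | h
        · rw [if_pos h]
          have := hsmono 0 (j+1) (by omega) (by omega)
          omega
        · rw [if_neg (by omega)]
          exact hsmono (i+1) (j+1) (by omega) (by omega)
      have hz'' : ∀ i, 1 ≤ i → i ≤ s (k+1+1) - 1 →
          (Function.update τ (s 1) true i = false ↔
            ∃ j, 1 ≤ j ∧ j ≤ k ∧ (if j = 0 then 0 else s (j+1)) = i) := by
        intro i hi1 hi2
        rcases eq_or_ne i (s 1) with hie | hie
        · subst hie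
          rw [Function.update_self]
          simp only [Bool.true_eq_false, false_iff]
          rintro ⟨j, hj1, hj2, hj3⟩
          rw [if_neg (by omega : j ≠ 0)] at hj3
          have := hsmono 1 (j+1) (by omega) (by omega)
          omega
        · rw [Function.update_of_ne hie, hz i hi1 hi2]
          constructor
          · rintro ⟨j, hj1, hj2, hj3⟩
            have hj2' : 2 ≤ j := by
              rcases Nat.eq_or_lt_of_le hj1 with h' | h'
              · exfalso; apply hie; rw [← h'] at hj3; omega
              · omega
            refine ⟨j - 1, by omega, by omega, ?_⟩
            rw [if_neg (by omega : j - 1 ≠ 0), show j - 1 + 1 = j by omega]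
            exact hj3
          · rintro ⟨j, hj1, hj2, hj3⟩
            rw [if_neg (by omega : j ≠ 0)] at hj3
            exact ⟨j + 1, by omega, by omega, hj3⟩
      exact ih (fun j => if j = 0 then 0 else s (j+1)) (Function.update τ (s 1) true)
        (by simp) hmono'' hsn
        (by show 1 ≤ (if k+1 = 0 then 0 else s (k+1+1)); rw [if_neg (Nat.succ_ne_zero k)]; omega)
        hz''
    -- assemble
    have hdet := BDF_detRec a ha0 haneg k s hs0
      (fun i j hij hjk => hsmono i j hij (by omega))
    rw [hdet, ← hshift, ← hrest]
    have hEfreeReal : (P {ω | ∀ i, 1 ≤ i ∧ i ≤ s (k+1+1) - 1 ∧ i ≠ s 1 → X i ω = τ i}).toReal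
        = a (s 1) *
          (P {ω | ∀ i, (s 1 - 1) + 2 ≤ i → i ≤ s (k+1+1) - 1 → X i ω = τ i}).toReal := by
      rw [hprod, ENNReal.toReal_mul, hblock]
    have hsum : (P {ω | ∀ i, 1 ≤ i ∧ i ≤ s (k+1+1) - 1 ∧ i ≠ s 1 → X i ω = τ i}).toReal
        = (P {ω | ∀ i, 1 ≤ i → i ≤ s (k+1+1) - 1 →
              X i ω = Function.update τ (s 1) true i}).toReal
          + (P {ω | ∀ i, 1 ≤ i → i ≤ s (k+1+1) - 1 → X i ω = τ i}).toReal := by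
      rw [hsplit, ENNReal.toReal_add (measure_ne_top P _) (measure_ne_top P _)]
    rw [hone] at hsum
    rw [hEfreeReal] at hsum
    linarith

end BDFhelpers

/-- Borodin–Diaconis–Fulman determinantal formula for stationary one-dependent
binary processes. Here `X 1, …, X n` is the process (with `true` = 1), which is:
* stationary: the joint distribution of `(X (k+1), …, X (k+m))` does not depend on `k`;
* one-dependent: `(X 1, …, X k)` is independent of `(X (k+2), …, X n)`.

With `a 1 = 1`, `a i = P(X 1 = ⋯ = X (i-1) = 1)` for `i ≥ 2`, `a 0 = 1`, `a i = 0`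
for `i < 0`, and a binary string `t 1, …, t (n-1)` whose zeros are exactly at positions
`s 1 < ⋯ < s k` (with conventions `s 0 = 0`, `s (k+1) = n`), one has
`P(X 1 = t 1, …, X (n-1) = t (n-1)) = det (a (s (j+1) - s i))_{i,j=0}^k`. -/
theorem stmt13 {Ω : Type*} [MeasurableSpace Ω] (P : Measure Ω) [IsProbabilityMeasure P]
    (n : ℕ) (hn : 1 ≤ n)
    (X : ℕ → Ω → Bool) (hXmeas : ∀ i, Measurable (X i))
    (hstat : ∀ (k m : ℕ) (u : Fin m → Bool), k + m ≤ n →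
      P {ω | ∀ i : Fin m, X (k + 1 + (i : ℕ)) ω = u i}
        = P {ω | ∀ i : Fin m, X (1 + (i : ℕ)) ω = u i})
    (honedep : ∀ (k : ℕ) (u v : ℕ → Bool),
      P ({ω | ∀ i, 1 ≤ i → i ≤ k → X i ω = u i} ∩
          {ω | ∀ i, k + 2 ≤ i → i ≤ n → X i ω = v i})
        = P {ω | ∀ i, 1 ≤ i → i ≤ k → X i ω = u i} *
            P {ω | ∀ i, k + 2 ≤ i → i ≤ n → X i ω = v i})
    (a : ℤ → ℝ) (ha0 : a 0 = 1) (ha1 : a 1 = 1) (haneg : ∀ i : ℤ, i < 0 → a i = 0)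
    (ha : ∀ i : ℕ, 2 ≤ i → i ≤ n + 1 →
      a i = (P {ω | ∀ m, 1 ≤ m → m ≤ i - 1 → X m ω = true}).toReal)
    (t : ℕ → Bool) (k : ℕ) (s : ℕ → ℕ)
    (hs0 : s 0 = 0) (hsk : s (k + 1) = n)
    (hsmono : ∀ i j : ℕ, i < j → j ≤ k + 1 → s i < s j)
    (hzeros : ∀ i : ℕ, 1 ≤ i → i ≤ n - 1 →
      (t i = false ↔ ∃ j : ℕ, 1 ≤ j ∧ j ≤ k ∧ s j = i)) :
    (P {ω | ∀ i, 1 ≤ i → i ≤ n - 1 → X i ω = t i}).toReal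
      = Matrix.det
          (Matrix.of fun i j : Fin (k + 1) =>
            a ((s ((j : ℕ) + 1) : ℤ) - (s (i : ℕ) : ℤ))) := by
  have h := BDF_master P X n hXmeas hstat honedep a ha0 ha1 haneg ha k s t
    hs0 hsmono (le_of_eq hsk) (by rw [hsk]; exact hn) (by rw [hsk]; exact hzeros)
  rw [hsk] at h
  exact h
end
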